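/- arXiv:1111.4842 — 8 statements merged into one kernel-verified Lean document; each statement's English description precedes it below -/
import Mathlib

section
/- For every positive integer n, the number of integers k with 1 ≤ k ≤ n such that gcd(k, n) is a perfect square equals β(n) = Σ_{d∣n} d·λ(n/d). -/
/-- The Liouville function `λ(n) = (-1)^Ω(n)`. -/
def lam (n : ℕ) : ℤ := (-1) ^ (ArithmeticFunction.cardFactors n)

/-- The alternating sum-of-divisors function `β(n) = ∑_{d ∣ n} d · λ(n/d)`. -/
def beta (n : ℕ) : ℤ := ∑ d ∈ n.divisors, (d : ℤ) * lam (n / d)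

open ArithmeticFunction Finset
open scoped ArithmeticFunction.zeta

/-- The Liouville function as an arithmetic function. -/
def Lf : ArithmeticFunction ℤ := ⟨fun n => if n = 0 then 0 else lam n, if_pos rfl⟩

lemma Lf_apply {n : ℕ} (hn : n ≠ 0) : Lf n = lam n := if_neg hn

lemma Lf_mult : ArithmeticFunction.IsMultiplicative Lf := by
  constructor
  · simp [Lf, lam]
  · intro m n h
    rcases eq_or_ne m 0 with rfl | hm
    · rw [Nat.coprime_zero_left] at h; subst h; simp [Lf]
    rcases eq_or_ne n 0 with rfl | hn'
    · rw [Nat.coprime_zero_right] at h; subst h; simp [Lf]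
    rw [Lf_apply (Nat.mul_ne_zero hm hn'), Lf_apply hm, Lf_apply hn', lam, lam, lam,
      ArithmeticFunction.cardFactors_mul hm hn', pow_add]

lemma isSquare_mul_iff_of_coprime {a b : ℕ} (h : Nat.Coprime a b) :
    IsSquare (a * b) ↔ IsSquare a ∧ IsSquare b := by
  constructor
  · rintro ⟨r, hr⟩
    have hr2 : a * b = r ^ 2 := by rw [hr, sq]
    have hu : IsUnit (gcd a b) := by
      rw [Nat.isUnit_iff]
      exact h
    obtain ⟨d, hd⟩ := exists_eq_pow_of_mul_eq_pow hu hr2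
    have hr2' : b * a = r ^ 2 := by rw [mul_comm]; exact hr2
    have hu' : IsUnit (gcd b a) := by
      rw [Nat.isUnit_iff]
      exact Nat.Coprime.symm h
    obtain ⟨e, he⟩ := exists_eq_pow_of_mul_eq_pow hu' hr2'
    exact ⟨⟨d, by rw [hd, sq]⟩, ⟨e, by rw [he, sq]⟩⟩
  · rintro ⟨⟨x, hx⟩, ⟨y, hy⟩⟩
    exact ⟨x * y, by rw [hx, hy]; ring⟩

lemma isSquare_prime_pow_iff {p k : ℕ} (hp : p.Prime) : IsSquare (p ^ k) ↔ Even k := by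
  constructor
  · rintro ⟨r, hr⟩
    have hdvd : r ∣ p ^ k := Dvd.intro r hr.symm
    obtain ⟨j, hj, rfl⟩ := (Nat.dvd_prime_pow hp).mp hdvd
    have : p ^ k = p ^ (j + j) := by rw [pow_add]; exact hr
    have hk : k = j + j := Nat.pow_right_injective hp.two_le this
    exact ⟨j, hk⟩
  · intro hk
    exact hk.isSquare_pow p

/-- Liouville's identity: the Dirichlet convolution of λ with ζ is the square indicator. -/
lemma Lf_mul_zeta_apply (n : ℕ) (hn : n ≠ 0) :
    (Lf * (ζ : ArithmeticFunction ℤ)) n = if IsSquare n then 1 else 0 := by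
  have hmult : (Lf * (ζ : ArithmeticFunction ℤ)).IsMultiplicative :=
    Lf_mult.mul ArithmeticFunction.isMultiplicative_zeta.natCast
  induction n using Nat.recOnPosPrimePosCoprime with
  | prime_pow p k hp hk =>
    rw [ArithmeticFunction.coe_mul_zeta_apply, Nat.sum_divisors_prime_pow hp]
    have : ∀ i ∈ range (k + 1), Lf (p ^ i) = (-1 : ℤ) ^ i := by
      intro i _
      rw [Lf_apply (pow_ne_zero i hp.pos.ne'), lam,
        ArithmeticFunction.cardFactors_apply_prime_pow hp]
    rw [Finset.sum_congr rfl this, neg_one_geom_sum]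
    by_cases h : Even k <;> simp [h, Nat.even_add_one, isSquare_prime_pow_iff hp]
  | zero => exact absurd rfl hn
  | one => simp [hmult.map_one]
  | coprime a b ha hb hab iha ihb =>
    rw [hmult.map_mul_of_coprime hab, iha (by omega), ihb (by omega)]
    by_cases h1 : IsSquare a <;> by_cases h2 : IsSquare b <;>
      simp [h1, h2, isSquare_mul_iff_of_coprime hab]

/-- Euler's totient as an arithmetic function. -/
def Phi : ArithmeticFunction ℕ := ⟨Nat.totient, Nat.totient_zero⟩

lemma Phi_apply (n : ℕ) : Phi n = Nat.totient n := rfl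

lemma zeta_mul_totient : (ζ * Phi : ArithmeticFunction ℕ) = .pow 1 := by
  ext n
  rw [ArithmeticFunction.zeta_mul_apply]
  rcases eq_or_ne n 0 with rfl | hn
  · simp
  · rw [ArithmeticFunction.pow_apply, if_neg (by simp [hn]), pow_one]
    simp only [Phi_apply]
    exact Nat.sum_totient n

/-- counting lemma -/
lemma count_eq (n : ℕ) (hn : 0 < n) :
    ((Finset.Icc 1 n).filter fun k => IsSquare (Nat.gcd k n)).card
      = ∑ d ∈ n.divisors, if IsSquare d then Nat.totient (n / d) else 0 := by
  have hstep : ((Finset.Icc 1 n).filter fun k => IsSquare (Nat.gcd k n)).card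
      = ((Finset.range n).filter fun k => IsSquare (Nat.gcd n k)).card := by
    apply Finset.card_bij' (fun k _ => k % n) (fun m _ => if m = 0 then n else m)
    · intro k hk
      simp only [mem_filter, mem_Icc] at hk
      have hgcd : Nat.gcd n (k % n) = Nat.gcd k n := by
        rw [Nat.gcd_comm n (k % n), ← Nat.gcd_rec, Nat.gcd_comm]
      simp only [mem_filter, mem_range]
      exact ⟨Nat.mod_lt _ hn, by rw [hgcd]; exact hk.2⟩
    · intro m hm
      simp only [mem_filter, mem_range] at hm
      by_cases h0 : m = 0
      · subst h0
        simp only [if_pos rfl, mem_filter, mem_Icc]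
        refine ⟨⟨hn, le_refl n⟩, ?_⟩
        simpa [Nat.gcd_zero_right] using hm.2
      · simp only [if_neg h0, mem_filter, mem_Icc]
        exact ⟨⟨Nat.one_le_iff_ne_zero.mpr h0, le_of_lt hm.1⟩,
          by rw [Nat.gcd_comm]; exact hm.2⟩
    · intro k hk
      simp only [mem_filter, mem_Icc] at hk
      rcases lt_or_eq_of_le hk.1.2 with h | h
      · rw [Nat.mod_eq_of_lt h, if_neg (by omega)]
      · subst h
        rw [Nat.mod_self, if_pos rfl]
    · intro m hm
      simp only [mem_filter, mem_range] at hm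
      by_cases h0 : m = 0
      · subst h0; simp
      · rw [if_neg h0, Nat.mod_eq_of_lt hm.1]
  rw [hstep]
  rw [Finset.card_eq_sum_card_fiberwise
    (f := fun k => Nat.gcd n k) (t := n.divisors.filter IsSquare)
    (fun x hx => by
      simp only [mem_coe, mem_filter, mem_range] at hx
      simp only [mem_coe, mem_filter, Nat.mem_divisors]
      exact ⟨⟨Nat.gcd_dvd_left n x, hn.ne'⟩, hx.2⟩)]
  rw [Finset.sum_filter]
  apply Finset.sum_congr rfl
  intro d hd
  rw [Finset.filter_filter]
  by_cases hsq : IsSquare d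
  · simp only [if_pos hsq]
    rw [Nat.totient_div_of_dvd (Nat.dvd_of_mem_divisors hd)]
    congr 1
    apply Finset.filter_congr
    intro k _
    exact ⟨fun h => h.2, fun h => ⟨h ▸ hsq, h⟩⟩
  · simp only [if_neg hsq]

theorem stmt_0 (n : ℕ) (hn : 0 < n) :
    (((Finset.Icc 1 n).filter fun k => IsSquare (Nat.gcd k n)).card : ℤ) = beta n := by
  rw [count_eq n hn]
  have hcast : ((∑ d ∈ n.divisors, if IsSquare d then Nat.totient (n / d) else 0 : ℕ) : ℤ)
      = ∑ d ∈ n.divisors, (if IsSquare d then (Nat.totient (n / d) : ℤ) else 0) := by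
    push_cast
    rfl
  rw [hcast]
  have key : ∑ d ∈ n.divisors, (if IsSquare d then (Nat.totient (n / d) : ℤ) else 0)
      = ((Lf * (ζ : ArithmeticFunction ℤ)) *
          (Phi : ArithmeticFunction ℤ)) n := by
    rw [ArithmeticFunction.mul_apply, Nat.sum_divisorsAntidiagonal
      (fun a b => (Lf * (ζ : ArithmeticFunction ℤ)) a *
        ((Phi : ArithmeticFunction ℤ)) b)]
    apply Finset.sum_congr rfl
    intro d hd
    have hd0 : d ≠ 0 := by
      have := Nat.pos_of_mem_divisors hd; omega
    rw [Lf_mul_zeta_apply d hd0, ArithmeticFunction.natCoe_apply]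
    by_cases hsq : IsSquare d <;> simp [hsq, Phi_apply]
  rw [key, mul_assoc]
  have hz : ((ζ : ArithmeticFunction ℤ) * (Phi : ArithmeticFunction ℤ))
      = ((ArithmeticFunction.pow 1 : ArithmeticFunction ℕ) : ArithmeticFunction ℤ) := by
    rw [← ArithmeticFunction.natCoe_mul, zeta_mul_totient]
  rw [hz]
  rw [ArithmeticFunction.mul_apply, Nat.sum_divisorsAntidiagonal
    (fun a b => Lf a * ((ArithmeticFunction.pow 1 : ArithmeticFunction ℕ) :
      ArithmeticFunction ℤ) b)]
  rw [beta]
  rw [← Nat.sum_div_divisors n (fun d => (d : ℤ) * lam (n / d))]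
  apply Finset.sum_congr rfl
  intro d hd
  have hd0 : d ≠ 0 := Nat.pos_of_mem_divisors hd |>.ne'
  have hnd0 : n / d ≠ 0 := (Nat.div_pos (Nat.le_of_dvd hn (Nat.dvd_of_mem_divisors hd))
    (Nat.pos_of_mem_divisors hd)).ne'
  rw [Lf_apply hd0, ArithmeticFunction.natCoe_apply, ArithmeticFunction.pow_apply,
    if_neg (by simp), pow_one]
  rw [Nat.div_div_self (Nat.dvd_of_mem_divisors hd) hn.ne']
  ring
end

section
/- For every positive integer n, β(n) = Σ_{d²k = n} φ(k), the sum being over all pairs (d, k) of positive integers with d²k = n, where φ is Euler's totient function. -/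
open ArithmeticFunction Finset
open scoped ArithmeticFunction.zeta

/-- Liouville as an arithmetic function. -/
def L : ArithmeticFunction ℤ := ⟨fun n => if n = 0 then 0 else lam n, by simp⟩

lemma L_app {n : ℕ} (hn : n ≠ 0) : L n = lam n := if_neg hn

lemma L_mult : L.IsMultiplicative := by
  refine ArithmeticFunction.IsMultiplicative.iff_ne_zero.2 ⟨?_, ?_⟩
  · simp [L, lam]
  · intro m n hm hn _
    simp only [L_app hm, L_app hn, L_app (mul_ne_zero hm hn), lam,
      ArithmeticFunction.cardFactors_mul hm hn, pow_add]

/-- Indicator of positive squares as an arithmetic function. -/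
def SQ : ArithmeticFunction ℤ :=
  ⟨fun n => if IsSquare n ∧ n ≠ 0 then 1 else 0, by simp⟩

lemma SQ_app {n : ℕ} (hn : n ≠ 0) : SQ n = if IsSquare n then 1 else 0 := by
  simp [SQ, hn]

lemma SQ_mult : SQ.IsMultiplicative := by
  refine ArithmeticFunction.IsMultiplicative.iff_ne_zero.2 ⟨?_, ?_⟩
  · simp [SQ]
  · intro m n hm hn hmn
    rw [SQ_app hm, SQ_app hn, SQ_app (mul_ne_zero hm hn)]
    have : IsSquare (m * n) ↔ IsSquare m ∧ IsSquare n := by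
      constructor
      · rintro ⟨c, hc⟩
        have h1 : m * n = c ^ 2 := by rw [hc, sq]
        obtain ⟨a, ha⟩ := exists_eq_pow_of_mul_eq_pow (Nat.isUnit_iff.2 hmn) h1
        obtain ⟨b, hb⟩ := exists_eq_pow_of_mul_eq_pow (Nat.isUnit_iff.2 hmn.symm)
          (by rwa [mul_comm] at h1)
        exact ⟨⟨a, by rw [ha, sq]⟩, ⟨b, by rw [hb, sq]⟩⟩
      · rintro ⟨⟨a, ha⟩, ⟨b, hb⟩⟩
        exact ⟨a * b, by rw [ha, hb]; ring⟩
    by_cases h1 : IsSquare m <;> by_cases h2 : IsSquare n <;> simp [this, h1, h2]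

lemma zeta_mul_L : (↑(ζ : ArithmeticFunction ℕ) : ArithmeticFunction ℤ) * L = SQ := by
  rw [ArithmeticFunction.IsMultiplicative.eq_iff_eq_on_prime_powers _
    ((ArithmeticFunction.isMultiplicative_zeta.natCast).mul L_mult) _ SQ_mult]
  intro p k hp
  rw [ArithmeticFunction.coe_zeta_mul_apply,
    Nat.sum_divisors_prime_pow hp (f := fun d => L d)]
  have hpk : ∀ j : ℕ, L (p ^ j) = (-1 : ℤ) ^ j := by
    intro j
    rw [L_app (pow_ne_zero _ hp.pos.ne'), lam,
      ArithmeticFunction.cardFactors_apply_prime_pow hp]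
  simp only [hpk]
  rw [neg_one_geom_sum, SQ_app (pow_ne_zero _ hp.pos.ne')]
  have hsq : IsSquare (p ^ k) ↔ Even k := by
    constructor
    · rintro ⟨c, hc⟩
      have h1 : p ^ k = c ^ 2 := by rw [hc, sq]
      have hk : (p ^ k).factorization p = k := by
        simp [hp.factorization_pow]
      rw [h1, Nat.factorization_pow, Finsupp.smul_apply, smul_eq_mul] at hk
      exact ⟨c.factorization p, by omega⟩
    · intro hk
      exact hk.isSquare_pow p
  by_cases h : Even k <;> simp [h, hsq, Nat.even_add_one]

/-- Totient as an integer-valued arithmetic function. -/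
def PHI : ArithmeticFunction ℤ := ⟨fun n => (Nat.totient n : ℤ), by simp⟩

lemma PHI_apply (n : ℕ) : PHI n = (Nat.totient n : ℤ) := rfl

/-- Identity as an integer-valued arithmetic function. -/
def ID : ArithmeticFunction ℤ := ⟨fun n => (n : ℤ), by simp⟩

lemma PHI_mul_zeta : PHI * (↑(ζ : ArithmeticFunction ℕ) : ArithmeticFunction ℤ) = ID := by
  ext n
  rcases eq_or_ne n 0 with rfl | hn
  · simp
  rw [ArithmeticFunction.coe_mul_zeta_apply]
  show ∑ d ∈ n.divisors, PHI d = (n : ℤ)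
  simp only [PHI_apply]
  rw [← Nat.cast_sum, Nat.sum_totient]

theorem stmt_3 (n : ℕ) (hn : 0 < n) :
    beta n = ∑ d ∈ n.divisors.filter (fun d => d ^ 2 ∣ n), (Nat.totient (n / d ^ 2) : ℤ) := by
  have h1 : beta n = (ID * L) n := by
    rw [ArithmeticFunction.mul_apply, beta,
      Nat.sum_divisorsAntidiagonal (fun i j => ID i * L j)]
    refine Finset.sum_congr rfl fun d hd => ?_
    rw [Nat.mem_divisors] at hd
    have hd0 : 0 < d := Nat.pos_of_dvd_of_pos hd.1 hn
    have hnd : n / d ≠ 0 := (Nat.div_pos (Nat.le_of_dvd hn hd.1) hd0).ne'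
    rw [L_app hnd]
    rfl
  have h2 : ID * L = PHI * SQ := by
    rw [← PHI_mul_zeta, mul_assoc, zeta_mul_L]
  rw [h1, h2, ArithmeticFunction.mul_apply,
    Nat.sum_divisorsAntidiagonal' (fun i j => PHI i * SQ j)]
  have key : ∑ d ∈ n.divisors, PHI (n / d) * SQ d
      = ∑ d ∈ n.divisors.filter (fun d => IsSquare d), (Nat.totient (n / d) : ℤ) := by
    rw [Finset.sum_filter]
    refine Finset.sum_congr rfl fun d hd => ?_
    rw [Nat.mem_divisors] at hd
    rw [SQ_app (Nat.pos_of_mem_divisors (Nat.mem_divisors.2 hd)).ne', PHI_apply]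
    by_cases h : IsSquare d <;> simp [h]
  rw [key]
  have hsqrt : ∀ c : ℕ, (c * c).sqrt = c := fun c => Nat.sqrt_eq c
  refine Finset.sum_nbij' (fun d => d.sqrt) (fun d => d ^ 2) ?_ ?_ ?_ ?_ ?_
  · intro d hd
    simp only [Finset.mem_filter, Nat.mem_divisors] at hd ⊢
    obtain ⟨⟨hdvd, hn0⟩, c, hc⟩ := hd
    have hs : d.sqrt = c := by rw [hc, hsqrt]
    refine ⟨⟨?_, hn0⟩, ?_⟩ <;> rw [hs]
    · exact dvd_trans (Dvd.intro c hc.symm) hdvd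
    · rw [sq, ← hc]; exact hdvd
  · intro d hd
    simp only [Finset.mem_filter, Nat.mem_divisors] at hd ⊢
    exact ⟨⟨hd.2, hd.1.2⟩, ⟨d, by rw [sq]⟩⟩
  · intro d hd
    simp only [Finset.mem_filter, Nat.mem_divisors] at hd
    obtain ⟨_, c, hc⟩ := hd
    show d.sqrt ^ 2 = d
    rw [hc, hsqrt, sq]
  · intro d hd
    show (d ^ 2).sqrt = d
    rw [sq, hsqrt]
  · intro d hd
    simp only [Finset.mem_filter, Nat.mem_divisors] at hd
    obtain ⟨_, c, hc⟩ := hd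
    show ((n / d).totient : ℤ) = ((n / d.sqrt ^ 2).totient : ℤ)
    rw [hc, hsqrt, sq]
end

section
/- For every positive integer n, β(n) ≤ φ*(n), with equality if and only if n is squarefree or twice a squarefree number; here φ* is the unitary Euler function, i.e., the multiplicative function with φ*(p^a) = p^a − 1 for every prime power p^a with a ≥ 1, and φ*(1) = 1. -/
/-- The unitary Euler function `φ*(n) = ∏_{p^a ∥ n} (p^a - 1)`, with `φ*(1) = 1`. -/
def phiStar (n : ℕ) : ℕ := n.factorization.prod fun p a => p ^ a - 1

/-- prime-power value of beta, recursively. -/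
def bp (p : ℕ) : ℕ → ℤ
  | 0 => 1
  | k + 1 => (p : ℤ) ^ (k + 1) - bp p k

lemma lam_prime_pow {p : ℕ} (hp : p.Prime) (k : ℕ) : lam (p ^ k) = (-1) ^ k := by
  rw [lam, ArithmeticFunction.cardFactors_apply_prime_pow hp]

lemma beta_prime_pow_sum {p : ℕ} (hp : p.Prime) (k : ℕ) :
    beta (p ^ k) = ∑ x ∈ Finset.range (k + 1), ((p : ℤ) ^ x) * (-1) ^ (k - x) := by
  rw [beta, Nat.sum_divisors_prime_pow hp]
  refine Finset.sum_congr rfl fun x hx => ?_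
  rw [Finset.mem_range] at hx
  rw [Nat.pow_div (by omega) hp.pos, lam_prime_pow hp]
  push_cast
  ring

lemma beta_prime_pow {p : ℕ} (hp : p.Prime) (k : ℕ) : beta (p ^ k) = bp p k := by
  induction k with
  | zero => rw [beta_prime_pow_sum hp]; simp [bp]
  | succ k ih =>
    rw [beta_prime_pow_sum hp, bp, ← ih, beta_prime_pow_sum hp]
    rw [Finset.sum_range_succ]
    have : ∀ x ∈ Finset.range (k + 1),
        ((p : ℤ) ^ x) * (-1) ^ (k + 1 - x) = -(((p : ℤ) ^ x) * (-1) ^ (k - x)) := by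
      intro x hx
      rw [Finset.mem_range] at hx
      have : k + 1 - x = (k - x) + 1 := by omega
      rw [this, pow_succ]
      ring
    rw [Finset.sum_congr rfl this, Finset.sum_neg_distrib]
    simp
    ring

lemma bp_one_le {p : ℕ} (hp : 2 ≤ p) : ∀ k, 1 ≤ bp p k ∧ bp p k ≤ (p : ℤ) ^ k := by
  intro k
  induction k with
  | zero => simp [bp]
  | succ k ih =>
    have hpk : (1 : ℤ) ≤ (p : ℤ) ^ k := one_le_pow₀ (by exact_mod_cast hp.trans' one_le_two)
    have hpk1 : (p : ℤ) ^ k * 2 ≤ (p : ℤ) ^ (k + 1) := by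
      rw [pow_succ]
      have : (2 : ℤ) ≤ (p : ℤ) := by exact_mod_cast hp
      nlinarith
    constructor
    · rw [bp]; nlinarith [ih.1, ih.2]
    · rw [bp]; nlinarith [ih.1, ih.2]

lemma bp_le {p : ℕ} (hp : 2 ≤ p) (k : ℕ) (hk : 1 ≤ k) : bp p k ≤ (p : ℤ) ^ k - 1 := by
  obtain ⟨j, rfl⟩ := Nat.exists_eq_add_of_le hk
  rw [show 1 + j = j + 1 by omega, bp]
  linarith [(bp_one_le hp j).1]

lemma bp_eq_one_iff {p : ℕ} (hp : 2 ≤ p) (k : ℕ) :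
    bp p k = 1 ↔ k = 0 ∨ (p = 2 ∧ k = 1) := by
  match k with
  | 0 => simp [bp]
  | 1 =>
    have hp' : (2:ℤ) ≤ (p:ℤ) := by exact_mod_cast hp
    have hb : bp p 1 = (p:ℤ) - 1 := by simp [bp]
    rw [hb]
    constructor
    · intro h
      have : (p:ℤ) = 2 := by linarith
      right
      exact ⟨by exact_mod_cast this, rfl⟩
    · rintro (h | ⟨h, -⟩)
      · omega
      · subst h; norm_num
  | (j + 2) =>
    have h1 := bp_le hp (j + 1) (by omega)
    have h2 : (p : ℤ) ^ (j + 1) * 2 ≤ (p : ℤ) ^ (j + 2) := by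
      rw [show (p:ℤ) ^ (j+2) = (p:ℤ)^(j+1) * p from pow_succ _ _]
      have : (2 : ℤ) ≤ (p : ℤ) := by exact_mod_cast hp
      have hpk : (0 : ℤ) < (p : ℤ) ^ (j + 1) := pow_pos (by linarith) _
      nlinarith
    have hpk : (1 : ℤ) ≤ (p : ℤ) ^ (j + 1) := one_le_pow₀ (by exact_mod_cast hp.trans' one_le_two)
    constructor
    · intro h
      rw [bp] at h
      exfalso
      nlinarith
    · rintro (h | ⟨-, h⟩) <;> omega

lemma bp_eq_iff {p : ℕ} (hp : 2 ≤ p) (k : ℕ) (hk : 1 ≤ k) :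
    bp p k = (p : ℤ) ^ k - 1 ↔ k = 1 ∨ (p = 2 ∧ k = 2) := by
  obtain ⟨j, rfl⟩ := Nat.exists_eq_add_of_le hk
  rw [show 1 + j = j + 1 by omega, bp]
  have : (p:ℤ) ^ (j+1) - bp p j = (p:ℤ) ^ (j+1) - 1 ↔ bp p j = 1 := by constructor <;> intro h <;> linarith
  rw [this, bp_eq_one_iff hp]
  constructor
  · rintro (h | ⟨h1, h2⟩)
    · left; omega
    · right; exact ⟨h1, by omega⟩
  · rintro (h | ⟨h1, h2⟩)
    · left; omega
    · right; exact ⟨h1, by omega⟩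

open ArithmeticFunction in
def lamAF : ArithmeticFunction ℤ := ⟨fun n => if n = 0 then 0 else lam n, by simp⟩

open ArithmeticFunction in
def idZ : ArithmeticFunction ℤ := ⟨fun n => (n : ℤ), by simp⟩

lemma lamAF_mult : lamAF.IsMultiplicative := by
  constructor
  · show (if (1:ℕ) = 0 then (0:ℤ) else lam 1) = 1
    simp [lam]
  · intro m n h
    show (if m * n = 0 then (0:ℤ) else lam (m*n)) =
      (if m = 0 then (0:ℤ) else lam m) * (if n = 0 then (0:ℤ) else lam n)
    rcases eq_or_ne m 0 with rfl | hm
    · simp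
    rcases eq_or_ne n 0 with rfl | hn
    · simp
    rw [if_neg (mul_ne_zero hm hn), if_neg hm, if_neg hn, lam, lam, lam,
      ArithmeticFunction.cardFactors_mul hm hn, pow_add]

lemma idZ_mult : idZ.IsMultiplicative := by
  constructor
  · show ((1:ℕ) : ℤ) = 1; simp
  · intro m n _
    show ((m * n : ℕ) : ℤ) = (m : ℤ) * n
    push_cast; ring

lemma beta_eq_AF {n : ℕ} (hn : n ≠ 0) : beta n = (idZ * lamAF) n := by
  rw [ArithmeticFunction.mul_apply, beta,
    ← Nat.sum_divisorsAntidiagonal (fun a b => (a : ℤ) * lam b)]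
  refine Finset.sum_congr rfl fun x hx => ?_
  rw [Nat.mem_divisorsAntidiagonal] at hx
  have hx2 : x.2 ≠ 0 := by
    intro h; rw [h, mul_zero] at hx; exact hn hx.1.symm
  show (x.1 : ℤ) * lam x.2 = (x.1 : ℤ) * (if x.2 = 0 then (0:ℤ) else lam x.2)
  rw [if_neg hx2]

lemma beta_factorization {n : ℕ} (hn : n ≠ 0) :
    beta n = n.factorization.prod fun p k => bp p k := by
  rw [beta_eq_AF hn,
    (idZ_mult.mul lamAF_mult).multiplicative_factorization _ hn]
  refine Finset.prod_congr rfl fun p hp => ?_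
  have hp' : p.Prime := Nat.prime_of_mem_primeFactors (by
    rwa [Nat.support_factorization] at hp)
  show (idZ * lamAF) (p ^ n.factorization p) = bp p (n.factorization p)
  rw [← beta_eq_AF (pow_ne_zero _ hp'.pos.ne'), beta_prime_pow hp']

lemma phiStar_cast {n : ℕ} (hn : n ≠ 0) :
    (phiStar n : ℤ) = n.factorization.prod fun p k => (p : ℤ) ^ k - 1 := by
  rw [phiStar, Finsupp.prod, Finsupp.prod, Nat.cast_prod]
  refine Finset.prod_congr rfl fun p hp => ?_
  have hp' : Nat.Prime p := Nat.prime_of_mem_primeFactors (by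
    rwa [Nat.support_factorization] at hp)
  have h1 : 1 ≤ p ^ n.factorization p := Nat.one_le_pow _ _ hp'.pos
  push_cast [Nat.cast_sub h1]
  ring

lemma fact2_apply {p : ℕ} : (Nat.factorization 2) p = if p = 2 then 1 else 0 := by
  rw [Nat.Prime.factorization Nat.prime_two, Finsupp.single_apply]
  simp [eq_comm]

lemma cond_iff {n : ℕ} (hn : n ≠ 0) :
    (∀ p ∈ n.factorization.support,
      n.factorization p = 1 ∨ (p = 2 ∧ n.factorization p = 2)) ↔
    Squarefree n ∨ ∃ m : ℕ, Squarefree m ∧ n = 2 * m := by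
  constructor
  · intro h
    by_cases h2 : n.factorization 2 ≤ 1
    · left
      rw [Nat.squarefree_iff_factorization_le_one hn]
      intro p
      by_cases hps : p ∈ n.factorization.support
      · rcases h p hps with h1 | ⟨rfl, _⟩ <;> omega
      · simp [Finsupp.notMem_support_iff.mp hps]
    · right
      have h2' : n.factorization 2 = 2 := by
        have h2s : 2 ∈ n.factorization.support := Finsupp.mem_support_iff.mpr (by omega)
        rcases h 2 h2s with h1 | ⟨-, h⟩ <;> omega
      have hdvd : 2 ∣ n := Nat.dvd_of_factorization_pos (by omega)
      obtain ⟨m, rfl⟩ := hdvd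
      have hm : m ≠ 0 := by rintro rfl; exact hn (by simp)
      refine ⟨m, ?_, rfl⟩
      rw [Nat.squarefree_iff_factorization_le_one hm]
      intro p
      have key : (2 * m).factorization p = (Nat.factorization 2) p + m.factorization p := by
        rw [Nat.factorization_mul (by norm_num) hm]; simp
      by_cases hp2 : p = 2
      · subst hp2; rw [fact2_apply] at key; simp at key; omega
      · rw [fact2_apply, if_neg hp2] at key
        by_cases hps : p ∈ (2 * m).factorization.support
        · rcases h p hps with h1 | ⟨h3, -⟩
          · omega
          · exact absurd h3 hp2
        · have := Finsupp.notMem_support_iff.mp hps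
          omega
  · rintro (hsq | ⟨m, hm, rfl⟩) p hps
    · left
      have h1 := (Nat.squarefree_iff_factorization_le_one hn).mp hsq p
      have h2 := Finsupp.mem_support_iff.mp hps
      omega
    · have hm0 : m ≠ 0 := by rintro rfl; exact hn (by simp)
      have key : (2 * m).factorization p = (Nat.factorization 2) p + m.factorization p := by
        rw [Nat.factorization_mul (by norm_num) hm0]; simp
      have hmp := (Nat.squarefree_iff_factorization_le_one hm0).mp hm p
      have hsup := Finsupp.mem_support_iff.mp hps
      by_cases hp2 : p = 2
      · subst hp2; rw [fact2_apply] at key; simp at key; omega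
      · rw [fact2_apply, if_neg hp2] at key
        omega

theorem stmt_5 (n : ℕ) (hn : 0 < n) :
    beta n ≤ (phiStar n : ℤ) ∧
    (beta n = (phiStar n : ℤ) ↔ Squarefree n ∨ ∃ m : ℕ, Squarefree m ∧ n = 2 * m) := by
  have hn0 : n ≠ 0 := hn.ne'
  have hprime : ∀ p ∈ n.factorization.support, p.Prime := fun p hp =>
    Nat.prime_of_mem_primeFactors (by rwa [Nat.support_factorization] at hp)
  have hposk : ∀ p ∈ n.factorization.support, 1 ≤ n.factorization p := fun p hp =>
    Nat.one_le_iff_ne_zero.mpr (Finsupp.mem_support_iff.mp hp)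
  have hb : beta n = ∏ p ∈ n.factorization.support, bp p (n.factorization p) := by
    rw [beta_factorization hn0, Finsupp.prod]
  have hph : (phiStar n : ℤ) =
      ∏ p ∈ n.factorization.support, ((p : ℤ) ^ (n.factorization p) - 1) := by
    rw [phiStar_cast hn0, Finsupp.prod]
  have hfle : ∀ p ∈ n.factorization.support,
      bp p (n.factorization p) ≤ (p : ℤ) ^ (n.factorization p) - 1 := fun p hp =>
    bp_le (hprime p hp).two_le _ (hposk p hp)
  have hfpos : ∀ p ∈ n.factorization.support, (0 : ℤ) < bp p (n.factorization p) := fun p hp =>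
    lt_of_lt_of_le zero_lt_one (bp_one_le (hprime p hp).two_le _).1
  refine ⟨?_, ?_⟩
  · rw [hb, hph]
    exact Finset.prod_le_prod (fun p hp => (hfpos p hp).le) hfle
  · rw [hb, hph, ← cond_iff hn0]
    constructor
    · intro h p hp
      rw [← bp_eq_iff (hprime p hp).two_le _ (hposk p hp)]
      by_contra hne
      have hlt : bp p (n.factorization p) < (p : ℤ) ^ (n.factorization p) - 1 :=
        lt_of_le_of_ne (hfle p hp) hne
      exact absurd h (ne_of_lt (Finset.prod_lt_prod hfpos hfle ⟨p, hp, hlt⟩))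
    · intro h
      exact Finset.prod_congr rfl fun p hp =>
        (bp_eq_iff (hprime p hp).two_le _ (hposk p hp)).mpr (h p hp)
end

section
/- For every positive integer n with n ≠ 2 and n ≠ 6, β(n) ≥ √n. -/
/-- Liouville as an arithmetic function. -/
def Lfun : ArithmeticFunction ℤ := ⟨fun n => if n = 0 then 0 else lam n, by simp⟩

lemma Lfun_apply {n : ℕ} (h : n ≠ 0) : Lfun n = lam n := if_neg h

lemma lam_one : lam 1 = 1 := by simp [lam]

lemma Lfun_mult : Lfun.IsMultiplicative := by
  constructor
  · rw [Lfun_apply one_ne_zero, lam_one]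
  · intro m n _h
    rcases eq_or_ne m 0 with rfl | hm
    · simp [Lfun]
    rcases eq_or_ne n 0 with rfl | hn
    · simp [Lfun]
    rw [Lfun_apply hm, Lfun_apply hn, Lfun_apply (mul_ne_zero hm hn)]
    unfold lam
    rw [ArithmeticFunction.cardFactors_mul hm hn, pow_add]

/-- β as an arithmetic function: convolution of id and λ. -/
def betaA : ArithmeticFunction ℤ :=
  ((ArithmeticFunction.id : ArithmeticFunction ℕ) : ArithmeticFunction ℤ) * Lfun

lemma beta_eq (n : ℕ) : beta n = betaA n := by
  rcases eq_or_ne n 0 with rfl | hn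
  · simp [beta, betaA]
  rw [betaA, ArithmeticFunction.mul_apply,
    Nat.sum_divisorsAntidiagonal
      (fun d e => (((ArithmeticFunction.id : ArithmeticFunction ℕ) :
        ArithmeticFunction ℤ)) d * Lfun e)]
  unfold beta
  refine Finset.sum_congr rfl fun d hd => ?_
  obtain ⟨hdvd, -⟩ := Nat.mem_divisors.mp hd
  have hd0 : 0 < d := Nat.pos_of_mem_divisors hd
  have hd2 : n / d ≠ 0 := (Nat.div_pos (Nat.le_of_dvd (by omega) hdvd) hd0).ne'
  rw [Lfun_apply hd2, ArithmeticFunction.natCoe_apply, ArithmeticFunction.id_apply]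

lemma betaA_mult : betaA.IsMultiplicative :=
  (ArithmeticFunction.isMultiplicative_id.natCast).mul Lfun_mult

lemma beta_mul {m n : ℕ} (h : m.Coprime n) : beta (m * n) = beta m * beta n := by
  rw [beta_eq, beta_eq, beta_eq]; exact betaA_mult.map_mul_of_coprime h

lemma beta_one : beta 1 = 1 := by simp [beta, lam_one]

lemma beta_prime_pow_s6 {p : ℕ} (hp : p.Prime) (a : ℕ) :
    beta (p ^ a) = ∑ i ∈ Finset.range (a + 1), (-1 : ℤ) ^ (a - i) * (p : ℤ) ^ i := by
  rw [beta, Nat.sum_divisors_prime_pow hp]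
  refine Finset.sum_congr rfl fun i hi => ?_
  have hia : i ≤ a := by simpa [Nat.lt_succ_iff] using hi
  rw [Nat.pow_div hia hp.pos]
  unfold lam
  rw [ArithmeticFunction.cardFactors_apply_prime_pow hp]
  push_cast
  ring

lemma beta_pp_succ {p : ℕ} (hp : p.Prime) (a : ℕ) :
    beta (p ^ (a + 1)) = (p : ℤ) ^ (a + 1) - beta (p ^ a) := by
  rw [beta_prime_pow_s6 hp, beta_prime_pow_s6 hp, Finset.sum_range_succ]
  have h : ∀ i ∈ Finset.range (a + 1),
      (-1 : ℤ) ^ (a + 1 - i) * (p : ℤ) ^ i = -((-1 : ℤ) ^ (a - i) * (p : ℤ) ^ i) := by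
    intro i hi
    have hia : a + 1 - i = (a - i) + 1 := by
      have : i ≤ a := by simpa [Nat.lt_succ_iff] using hi
      omega
    rw [hia, pow_succ]; ring
  rw [Finset.sum_congr rfl h, Finset.sum_neg_distrib]
  simp
  ring

lemma beta_pp_bounds {p : ℕ} (hp : p.Prime) (a : ℕ) :
    1 ≤ beta (p ^ a) ∧ beta (p ^ a) ≤ (p : ℤ) ^ a := by
  have hp2 : (2 : ℤ) ≤ (p : ℤ) := by exact_mod_cast hp.two_le
  induction a with
  | zero => simp [beta_one]
  | succ a ih =>
    obtain ⟨ih1, ih2⟩ := ih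
    have hpa : (1 : ℤ) ≤ (p : ℤ) ^ a := one_le_pow₀ (by linarith)
    have hps : (p : ℤ) ^ (a + 1) = (p : ℤ) ^ a * p := pow_succ _ _
    constructor
    · rw [beta_pp_succ hp]
      nlinarith
    · rw [beta_pp_succ hp]
      linarith

lemma beta_pp_ge {p : ℕ} (hp : p.Prime) (a : ℕ) :
    (p : ℤ) ^ (a + 1) - (p : ℤ) ^ a ≤ beta (p ^ (a + 1)) := by
  rw [beta_pp_succ hp]
  linarith [(beta_pp_bounds hp a).2]

lemma beta_two : beta 2 = 1 := by
  have := beta_pp_succ Nat.prime_two 0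
  simpa [beta_one] using this

lemma beta_three : beta 3 = 2 := by
  have := beta_pp_succ Nat.prime_three 0
  simpa [beta_one] using this

/-- The key power inequality for exponents ≥ 2. -/
lemma key_ineq {q : ℤ} (hq : 3 ≤ q) (c : ℕ) :
    2 * q ^ (c + 2) ≤ (q ^ (c + 2) - q ^ (c + 1)) ^ 2 := by
  have e1 : q ^ (c + 2) = q ^ (c + 1) * q := pow_succ _ _
  have hA : q ≤ q ^ (c + 1) := le_self_pow₀ (by linarith) (by omega)
  have hq0 : (0 : ℤ) < q := by linarith
  have hB : (0 : ℤ) < q ^ (c + 1) := pow_pos hq0 _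
  rw [e1]
  set B := q ^ (c + 1) with hBdef
  have h1 : 0 ≤ B * B * ((q - 3) * (q + 1)) := by
    apply mul_nonneg (mul_nonneg hB.le hB.le)
    apply mul_nonneg <;> linarith
  have h2 : 0 ≤ (B - q) * (4 * B) := by
    apply mul_nonneg <;> nlinarith
  nlinarith [mul_pos hB hq0]

/-- Strong bound for odd prime powers other than 3. -/
lemma oddpp_strong {p a : ℕ} (hp : p.Prime) (hodd : p ≠ 2) (ha : 0 < a)
    (h3 : ¬(p = 3 ∧ a = 1)) : 2 * (p : ℤ) ^ a ≤ beta (p ^ a) ^ 2 := by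
  have hp3 : (3 : ℤ) ≤ (p : ℤ) := by
    have h2 := hp.two_le
    have : 3 ≤ p := by
      rcases Nat.lt_or_ge p 3 with h | h
      · interval_cases p <;> simp_all
      · exact h
    exact_mod_cast this
  obtain ⟨b, rfl⟩ : ∃ b, a = b + 1 := ⟨a - 1, by omega⟩
  have hge := beta_pp_ge hp b
  have hq1 : (1 : ℤ) ≤ (p : ℤ) ^ b := one_le_pow₀ (by linarith)
  have hnn : (0 : ℤ) ≤ (p : ℤ) ^ (b + 1) - (p : ℤ) ^ b := by
    have : (p : ℤ) ^ (b + 1) = (p : ℤ) ^ b * p := pow_succ _ _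
    nlinarith
  have hsq : ((p : ℤ) ^ (b + 1) - (p : ℤ) ^ b) ^ 2 ≤ beta (p ^ (b + 1)) ^ 2 := by
    nlinarith
  rcases Nat.eq_zero_or_pos b with rfl | hb
  · -- a = 1, so p ≥ 5
    have hp5 : (5 : ℤ) ≤ (p : ℤ) := by
      have h2 := hp.two_le
      have hpne3 : p ≠ 3 := fun h => h3 ⟨h, rfl⟩
      have hpne4 : p ≠ 4 := by rintro rfl; exact absurd hp (by decide)
      have : 5 ≤ p := by omega
      exact_mod_cast this
    simp only [Nat.zero_add, pow_one, pow_zero] at hge hsq ⊢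
    nlinarith [mul_nonneg (by linarith : (0:ℤ) ≤ (p:ℤ) - 5) (by linarith : (0:ℤ) ≤ (p:ℤ))]
  · obtain ⟨c, rfl⟩ : ∃ c, b = c + 1 := ⟨b - 1, by omega⟩
    have := key_ineq hp3 c
    calc 2 * (p : ℤ) ^ (c + 1 + 1) = 2 * (p : ℤ) ^ (c + 2) := by norm_num
      _ ≤ ((p : ℤ) ^ (c + 2) - (p : ℤ) ^ (c + 1)) ^ 2 := this
      _ = ((p : ℤ) ^ (c + 1 + 1) - (p : ℤ) ^ (c + 1)) ^ 2 := by norm_num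
      _ ≤ beta (p ^ (c + 1 + 1)) ^ 2 := hsq

lemma beta_pos : ∀ m : ℕ, 0 < m → 1 ≤ beta m := by
  intro m
  induction m using Nat.recOnPosPrimePosCoprime with
  | prime_pow p n hpp hn =>
    intro _
    exact (beta_pp_bounds hpp n).1
  | zero => intro h; omega
  | one => intro _; simp [beta_one]
  | coprime a b ha hb hab iha ihb =>
    intro _
    rw [beta_mul hab]
    have h1 := iha (by omega)
    have h2 := ihb (by omega)
    nlinarith

/-- For odd m, either β(m)² ≥ 2m or m ∈ {1, 3}. -/
lemma Q_odd : ∀ m : ℕ, ¬ 2 ∣ m → 0 < m → 2 * (m : ℤ) ≤ beta m ^ 2 ∨ m = 1 ∨ m = 3 := by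
  intro m
  induction m using Nat.recOnPosPrimePosCoprime with
  | prime_pow p a hpp ha =>
    intro hodd _
    have hp' := hpp
    have hpne2 : p ≠ 2 := by
      rintro rfl
      exact hodd (dvd_pow_self 2 (by omega))
    by_cases h31 : p = 3 ∧ a = 1
    · right; right; rw [h31.1, h31.2, pow_one]
    · left
      have := oddpp_strong hp' hpne2 ha h31
      exact_mod_cast this
  | zero => intro _ h; omega
  | one => intro _ _; right; left; rfl
  | coprime a b ha hb hab iha ihb =>
    intro hodd _
    have hoa : ¬ 2 ∣ a := fun h => hodd (h.mul_right b)
    have hob : ¬ 2 ∣ b := fun h => hodd (h.mul_left a)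
    have Ha := iha hoa (by omega)
    have Hb := ihb hob (by omega)
    left
    rw [beta_mul hab]
    have hpa := beta_pos a (by omega)
    have hpb := beta_pos b (by omega)
    have hane : a ≠ 1 := by omega
    have hbne : b ≠ 1 := by omega
    rcases Ha with Ha | Ha | Ha
    · rcases Hb with Hb | Hb | Hb
      · have hca : (0:ℤ) < (a:ℤ) := by exact_mod_cast (by omega : 0 < a)
        have hcb : (0:ℤ) < (b:ℤ) := by exact_mod_cast (by omega : 0 < b)
        push_cast
        nlinarith
      · exact absurd Hb hbne
      · subst Hb
        rw [beta_three]
        have hca : (0:ℤ) < (a:ℤ) := by exact_mod_cast (by omega : 0 < a)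
        push_cast
        ring_nf
        nlinarith [Ha, hca]
    · exact absurd Ha hane
    · subst Ha
      rcases Hb with Hb | Hb | Hb
      · rw [beta_three]
        have hcb : (0:ℤ) < (b:ℤ) := by exact_mod_cast (by omega : 0 < b)
        push_cast
        ring_nf
        nlinarith [Hb, hcb]
      · exact absurd Hb hbne
      · subst Hb
        norm_num [Nat.Coprime] at hab

/-- For odd m, β(m)² ≥ m. -/
lemma R_odd (m : ℕ) (hodd : ¬ 2 ∣ m) (hm : 0 < m) : (m : ℤ) ≤ beta m ^ 2 := by
  rcases Q_odd m hodd hm with h | rfl | rfl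
  · have : (0:ℤ) ≤ (m:ℤ) := by positivity
    linarith
  · simp [beta_one]
  · rw [beta_three]; norm_num

theorem stmt_6 (n : ℕ) (hn : 0 < n) (h2 : n ≠ 2) (h6 : n ≠ 6) :
    Real.sqrt n ≤ (beta n : ℝ) := by
  have key : (n : ℤ) ≤ beta n ^ 2 := by
    set a := n.factorization 2 with hadef
    set m := n / 2 ^ a with hmdef
    have hdec : 2 ^ a * m = n := Nat.ordProj_mul_ordCompl_eq_self n 2
    have hm0 : 0 < m := Nat.ordCompl_pos 2 (by omega)
    have hmodd : ¬ 2 ∣ m := Nat.not_dvd_ordCompl Nat.prime_two (by omega)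
    have hcop : Nat.Coprime (2 ^ a) m :=
      Nat.Coprime.pow_left a (Nat.coprime_ordCompl Nat.prime_two (by omega))
    have hRm := R_odd m hmodd hm0
    match a, hdec, hcop with
    | 0, hdec, hcop =>
      simp only [pow_zero, one_mul] at hdec
      rw [← hdec]; exact hRm
    | 1, hdec, hcop =>
      rcases Q_odd m hmodd hm0 with hQ | hm1 | hm3
      · rw [← hdec, beta_mul hcop]
        rw [pow_one] at hdec ⊢
        rw [beta_two]
        push_cast
        nlinarith
      · exact absurd (by omega : n = 2) h2
      · exact absurd (by omega : n = 6) h6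
    | (c + 2), hdec, hcop =>
      rw [← hdec, beta_mul hcop]
      have h2pow : (2:ℤ) ^ (c + 2) ≤ beta (2 ^ (c + 2)) ^ 2 := by
        have hge : (2:ℤ) ^ (c + 1 + 1) - (2:ℤ) ^ (c + 1) ≤ beta (2 ^ (c + 1 + 1)) := by
          exact_mod_cast beta_pp_ge Nat.prime_two (c + 1)
        have he : (2:ℤ) ^ (c + 1 + 1) - (2:ℤ) ^ (c + 1) = (2:ℤ) ^ (c + 1) := by
          rw [pow_succ]; ring
        rw [he] at hge
        have hself : (2:ℤ) ≤ (2:ℤ) ^ (c + 1) := le_self_pow₀ one_le_two (by omega)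
        have hb2 := (beta_pp_bounds Nat.prime_two (c + 1 + 1)).1
        calc (2:ℤ) ^ (c + 2) = (2:ℤ) ^ (c + 1) * 2 := by rw [pow_succ]
          _ ≤ (2:ℤ) ^ (c + 1) * (2:ℤ) ^ (c + 1) := by nlinarith
          _ ≤ beta (2 ^ (c + 1 + 1)) * beta (2 ^ (c + 1 + 1)) := by nlinarith
          _ = beta (2 ^ (c + 2)) ^ 2 := by norm_num [sq]
      have hbm := beta_pos m hm0
      have hb2 := beta_pos (2 ^ (c + 2)) (by positivity)
      have hmz : (0:ℤ) ≤ (m:ℤ) := by positivity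
      push_cast
      nlinarith
  have hb1 : 1 ≤ beta n := beta_pos n hn
  have hbR : (0 : ℝ) ≤ (beta n : ℝ) := by exact_mod_cast le_trans zero_le_one hb1
  calc Real.sqrt n ≤ Real.sqrt (((beta n : ℝ)) ^ 2) := by
        apply Real.sqrt_le_sqrt
        exact_mod_cast key
    _ = (beta n : ℝ) := Real.sqrt_sq hbR
end

section
/- For every positive integer n, β(n) is odd if and only if n is a perfect square or twice a perfect square. -/
open Finset

lemma aux_isSquare_iff_even_factorization {m : ℕ} (hm : m ≠ 0) :
    IsSquare m ↔ ∀ p, Even (m.factorization p) := by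
  constructor
  · rintro ⟨t, rfl⟩ p
    have ht : t ≠ 0 := by rintro rfl; simp at hm
    rw [Nat.factorization_mul ht ht]
    simp only [Finsupp.coe_add, Pi.add_apply]
    exact Even.add_self _
  · intro h
    rw [← Nat.factorization_prod_pow_eq_self hm, Finsupp.prod]
    apply Finset.isSquare_prod
    intro p _
    obtain ⟨c, hc⟩ := h p
    exact ⟨p ^ c, by rw [← pow_add, ← hc]⟩

lemma aux_odd_card_divisors {m : ℕ} (hm : m ≠ 0) :
    Odd m.divisors.card ↔ IsSquare m := by
  rw [Nat.card_divisors hm, aux_isSquare_iff_even_factorization hm]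
  have h2 : ∀ s : Finset ℕ, ∀ f : ℕ → ℕ, (Odd (∏ p ∈ s, f p) ↔ ∀ p ∈ s, Odd (f p)) := by
    intro s f
    rw [← Nat.not_even_iff_odd, even_iff_two_dvd,
      Nat.prime_two.prime.dvd_finset_prod_iff]
    push_neg
    simp_rw [← even_iff_two_dvd, ← Nat.not_even_iff_odd]
  rw [h2]
  constructor
  · intro h p
    by_cases hp : p ∈ m.primeFactors
    · obtain ⟨c, hc⟩ := h p hp
      exact ⟨c, by omega⟩
    · rw [← Nat.support_factorization] at hp
      simp [Finsupp.notMem_support_iff.mp hp]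
  · intro h p _
    obtain ⟨c, hc⟩ := h p
    exact ⟨c, by omega⟩

lemma aux_filter_odd_divisors {n : ℕ} (hn : n ≠ 0) :
    {d ∈ n.divisors | Odd d} = (ordCompl[2] n).divisors := by
  ext d
  simp only [mem_filter, Nat.mem_divisors]
  constructor
  · rintro ⟨⟨hd, _⟩, hodd⟩
    refine ⟨?_, (Nat.ordCompl_pos 2 hn).ne'⟩
    have hc : Nat.Coprime d (2 ^ n.factorization 2) :=
      Nat.Coprime.pow_right _ (Nat.coprime_two_right.mpr hodd)
    have hd' : d ∣ ordCompl[2] n * 2 ^ n.factorization 2 := by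
      rw [mul_comm, Nat.ordProj_mul_ordCompl_eq_self]; exact hd
    exact hc.dvd_of_dvd_mul_right hd'
  · intro ⟨hd, _⟩
    refine ⟨⟨hd.trans (Nat.ordCompl_dvd n 2), hn⟩, ?_⟩
    rw [← Nat.not_even_iff_odd, even_iff_two_dvd]
    intro h2d
    exact Nat.not_dvd_ordCompl Nat.prime_two hn (h2d.trans hd)

theorem stmt_7 (n : ℕ) (hn : 0 < n) :
    Odd (beta n) ↔ (IsSquare n ∨ ∃ m : ℕ, n = 2 * m ^ 2) := by
  have hn0 : n ≠ 0 := hn.ne'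
  -- Step A : beta n has the same parity as σ(n)
  have hkey : ∀ k : ℕ, Even (lam k - 1) := by
    intro k
    unfold lam
    rcases Nat.even_or_odd (ArithmeticFunction.cardFactors k) with h | h
    · rw [h.neg_one_pow]; simp
    · rw [h.neg_one_pow]; decide
  have hsub : Even (beta n - ∑ d ∈ n.divisors, (d : ℤ)) := by
    rw [beta, ← Finset.sum_sub_distrib]
    apply Finset.even_sum
    intro d _
    have : (d : ℤ) * lam (n / d) - (d : ℤ) = (d : ℤ) * (lam (n / d) - 1) := by ring
    rw [this]
    exact (hkey _).mul_left _
  have hA : Odd (beta n) ↔ Odd (∑ d ∈ n.divisors, d) := by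
    rw [Int.even_sub] at hsub
    rw [← Int.not_even_iff_odd, hsub, Int.not_even_iff_odd, ← Nat.cast_sum]
    exact Int.odd_coe_nat _
  rw [hA, Finset.odd_sum_iff_odd_card_odd]
  have : {i ∈ n.divisors | Odd (id i)} = {d ∈ n.divisors | Odd d} := by simp
  rw [show (fun i => i) = (id : ℕ → ℕ) from rfl] at *
  rw [aux_filter_odd_divisors hn0,
    aux_odd_card_divisors (Nat.ordCompl_pos 2 hn0).ne']
  -- Now: IsSquare (ordCompl[2] n) ↔ IsSquare n ∨ ∃ m, n = 2 * m ^ 2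
  constructor
  · intro hsq
    have hfac : ∀ p, p ≠ 2 → Even (n.factorization p) := by
      intro p hp
      have := (aux_isSquare_iff_even_factorization
        (Nat.ordCompl_pos 2 hn0).ne').mp hsq p
      rwa [Nat.factorization_ordCompl, Finsupp.erase_ne hp] at this
    rcases Nat.even_or_odd (n.factorization 2) with he | ho
    · left
      rw [aux_isSquare_iff_even_factorization hn0]
      intro p
      by_cases hp : p = 2
      · subst hp; exact he
      · exact hfac p hp
    · right
      obtain ⟨t, ht⟩ := hsq
      obtain ⟨j, hj⟩ := ho
      refine ⟨2 ^ j * t, ?_⟩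
      have hself := Nat.ordProj_mul_ordCompl_eq_self n 2
      rw [← hself, ht, hj]
      ring
  · rintro (⟨t, rfl⟩ | ⟨m, rfl⟩)
    · rw [Nat.ordCompl_mul]
      exact ⟨_, rfl⟩
    · have hm : m ≠ 0 := by rintro rfl; simp at hn0
      rw [sq, Nat.ordCompl_mul, Nat.ordCompl_mul]
      have h2 : ordCompl[2] 2 = 1 := by
        have : (2 : ℕ).factorization 2 = 1 := Nat.Prime.factorization_self Nat.prime_two
        simp [this]
      rw [h2, one_mul]
      exact ⟨_, rfl⟩
end

section
/- For all positive integers n and m, β(n)·β(m) = Σ_{d ∣ gcd(n,m)} β(nm/d²)·d·λ(d). -/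
lemma lam_mul {a b : ℕ} (ha : a ≠ 0) (hb : b ≠ 0) : lam (a*b) = lam a * lam b := by
  unfold lam
  rw [ArithmeticFunction.cardFactors_mul ha hb, pow_add]

lemma fdvd {u v : ℕ} (hu : u ≠ 0) (hv : v ≠ 0)
    (h : ∀ p, u.factorization p ≤ v.factorization p) : u ∣ v :=
  (Nat.factorization_le_iff_dvd hu hv).1 (Finsupp.le_def.2 h)

lemma fle {u v : ℕ} (hu : u ≠ 0) (hv : v ≠ 0) (h : u ∣ v) (p : ℕ) :
    u.factorization p ≤ v.factorization p :=
  Finsupp.le_def.1 ((Nat.factorization_le_iff_dvd hu hv).2 h) p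

lemma fmul {u v : ℕ} (hu : u ≠ 0) (hv : v ≠ 0) (p : ℕ) :
    (u*v).factorization p = u.factorization p + v.factorization p := by
  rw [Nat.factorization_mul hu hv, Finsupp.add_apply]

lemma fgcd {u v : ℕ} (hu : u ≠ 0) (hv : v ≠ 0) (p : ℕ) :
    (Nat.gcd u v).factorization p = min (u.factorization p) (v.factorization p) := by
  rw [Nat.factorization_gcd hu hv, Finsupp.inf_apply]

lemma fdiv {u v : ℕ} (h : u ∣ v) (p : ℕ) :
    (v/u).factorization p = v.factorization p - u.factorization p := by
  rw [Nat.factorization_div h, Finsupp.tsub_apply]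

lemma fpow {u : ℕ} (k p : ℕ) : (u^k).factorization p = k * u.factorization p := by
  rw [Nat.factorization_pow, Finsupp.smul_apply]; rfl

lemma forward {n m d e : ℕ} (hn : n ≠ 0) (hm : m ≠ 0) (hd0 : d ≠ 0)
    (hd : d ∣ Nat.gcd n m) (he : e ∣ n * m / d ^ 2) :
    (d * (d * e / Nat.gcd (d * e) m)) ∣ n ∧
    (d * e / Nat.gcd (d * e) m) ∣ e ∧
    (d * e) / (d * (d * e / Nat.gcd (d * e) m)) ∣ m := by
  have hdn : d ∣ n := hd.trans (Nat.gcd_dvd_left n m)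
  have hdm : d ∣ m := hd.trans (Nat.gcd_dvd_right n m)
  have hN0 : n * m ≠ 0 := mul_ne_zero hn hm
  have hd2 : d ^ 2 ∣ n * m := by rw [pow_two]; exact mul_dvd_mul hdn hdm
  have hq0 : n * m / d ^ 2 ≠ 0 :=
    (Nat.div_pos (Nat.le_of_dvd (Nat.pos_of_ne_zero hN0) hd2)
      (pow_pos (Nat.pos_of_ne_zero hd0) 2)).ne'
  have he0 : e ≠ 0 := by rintro rfl; exact hq0 (Nat.eq_zero_of_zero_dvd he)
  have hX0 : d * e ≠ 0 := mul_ne_zero hd0 he0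
  have hgX : Nat.gcd (d * e) m ∣ d * e := Nat.gcd_dvd_left _ _
  have hg0 : Nat.gcd (d * e) m ≠ 0 := fun h => hm (Nat.eq_zero_of_gcd_eq_zero_right h)
  have hc0 : d * e / Nat.gcd (d * e) m ≠ 0 :=
    (Nat.div_pos (Nat.le_of_dvd (Nat.pos_of_ne_zero hX0) hgX)
      (Nat.pos_of_ne_zero hg0)).ne'
  have hcf : ∀ p, (d * e / Nat.gcd (d * e) m).factorization p =
      d.factorization p + e.factorization p
        - min (d.factorization p + e.factorization p) (m.factorization p) := by
    intro p; rw [fdiv hgX p, fgcd hX0 hm p, fmul hd0 he0 p]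
  have hdi := fle hd0 hn hdn
  have hdj := fle hd0 hm hdm
  have hee : ∀ p, e.factorization p + 2 * d.factorization p
      ≤ n.factorization p + m.factorization p := by
    intro p
    have h1 := fle he0 hq0 he p
    rw [fdiv hd2 p, fmul hn hm p, fpow 2 p] at h1
    have h2 := hdi p; have h3 := hdj p
    omega
  have hce : (d * e / Nat.gcd (d * e) m) ∣ e := by
    apply fdvd hc0 he0
    intro p; rw [hcf p]; have := hdj p; omega
  refine ⟨?_, hce, ?_⟩
  · apply fdvd (mul_ne_zero hd0 hc0) hn
    intro p; rw [fmul hd0 hc0 p, hcf p]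
    have := hdi p; have := hdj p; have := hee p; omega
  · have hac : d * (d * e / Nat.gcd (d * e) m) ∣ d * e := mul_dvd_mul_left d hce
    have hb0 : (d * e) / (d * (d * e / Nat.gcd (d * e) m)) ≠ 0 :=
      (Nat.div_pos (Nat.le_of_dvd (Nat.pos_of_ne_zero hX0) hac)
        (Nat.pos_of_ne_zero (mul_ne_zero hd0 hc0))).ne'
    apply fdvd hb0 hm
    intro p
    rw [fdiv hac p, fmul hd0 hc0 p, hcf p, fmul hd0 he0 p]
    have := hdj p; omega

lemma backward {n m a b : ℕ} (hn : n ≠ 0) (hm : m ≠ 0) (ha : a ∣ n) (hb : b ∣ m) :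
    (a * b / Nat.gcd (a * b) m) ∣ a ∧
    (a / (a * b / Nat.gcd (a * b) m)) ∣ Nat.gcd n m ∧
    (a * b) / (a / (a * b / Nat.gcd (a * b) m))
      ∣ n * m / (a / (a * b / Nat.gcd (a * b) m)) ^ 2 := by
  have ha0 : a ≠ 0 := fun h => hn (by simpa [h] using ha)
  have hb0 : b ≠ 0 := fun h => hm (by simpa [h] using hb)
  have hX0 : a * b ≠ 0 := mul_ne_zero ha0 hb0
  have hN0 : n * m ≠ 0 := mul_ne_zero hn hm
  have hgX : Nat.gcd (a * b) m ∣ a * b := Nat.gcd_dvd_left _ _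
  have hg0 : Nat.gcd (a * b) m ≠ 0 := fun h => hm (Nat.eq_zero_of_gcd_eq_zero_right h)
  have hc0 : a * b / Nat.gcd (a * b) m ≠ 0 :=
    (Nat.div_pos (Nat.le_of_dvd (Nat.pos_of_ne_zero hX0) hgX)
      (Nat.pos_of_ne_zero hg0)).ne'
  have hcf : ∀ p, (a * b / Nat.gcd (a * b) m).factorization p =
      a.factorization p + b.factorization p
        - min (a.factorization p + b.factorization p) (m.factorization p) := by
    intro p; rw [fdiv hgX p, fgcd hX0 hm p, fmul ha0 hb0 p]
  have hai := fle ha0 hn ha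
  have hbj := fle hb0 hm hb
  have hca : (a * b / Nat.gcd (a * b) m) ∣ a := by
    apply fdvd hc0 ha0
    intro p; rw [hcf p]; have := hbj p; omega
  have hd0 : a / (a * b / Nat.gcd (a * b) m) ≠ 0 :=
    (Nat.div_pos (Nat.le_of_dvd (Nat.pos_of_ne_zero ha0) hca)
      (Nat.pos_of_ne_zero hc0)).ne'
  have hdf : ∀ p, (a / (a * b / Nat.gcd (a * b) m)).factorization p =
      a.factorization p
        - (a.factorization p + b.factorization p
            - min (a.factorization p + b.factorization p) (m.factorization p)) := by
    intro p; rw [fdiv hca p, hcf p]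
  have hG0 : Nat.gcd n m ≠ 0 := fun h => hn (Nat.eq_zero_of_gcd_eq_zero_left h)
  have hdg : (a / (a * b / Nat.gcd (a * b) m)) ∣ Nat.gcd n m := by
    apply fdvd hd0 hG0
    intro p; rw [fgcd hn hm p, hdf p]
    have := hai p; have := hbj p; omega
  refine ⟨hca, hdg, ?_⟩
  have hdn : (a / (a * b / Nat.gcd (a * b) m)) ∣ n := hdg.trans (Nat.gcd_dvd_left n m)
  have hdm : (a / (a * b / Nat.gcd (a * b) m)) ∣ m := hdg.trans (Nat.gcd_dvd_right n m)
  have hd2 : (a / (a * b / Nat.gcd (a * b) m)) ^ 2 ∣ n * m := by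
    rw [pow_two]; exact mul_dvd_mul hdn hdm
  have hq0 : n * m / (a / (a * b / Nat.gcd (a * b) m)) ^ 2 ≠ 0 :=
    (Nat.div_pos (Nat.le_of_dvd (Nat.pos_of_ne_zero hN0) hd2)
      (pow_pos (Nat.pos_of_ne_zero hd0) 2)).ne'
  have hdX : (a / (a * b / Nat.gcd (a * b) m)) ∣ a * b :=
    (Nat.div_dvd_of_dvd hca).trans (dvd_mul_right a b)
  have he0 : (a * b) / (a / (a * b / Nat.gcd (a * b) m)) ≠ 0 :=
    (Nat.div_pos (Nat.le_of_dvd (Nat.pos_of_ne_zero hX0) hdX)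
      (Nat.pos_of_ne_zero hd0)).ne'
  apply fdvd he0 hq0
  intro p
  rw [fdiv hdX p, fmul ha0 hb0 p, hdf p, fdiv hd2 p, fmul hn hm p, fpow 2 p, hdf p]
  have := hai p; have := hbj p; omega

theorem stmt_9 (n m : ℕ) (hn : 0 < n) (hm : 0 < m) :
    beta n * beta m =
      ∑ d ∈ (Nat.gcd n m).divisors, beta (n * m / d ^ 2) * (d : ℤ) * lam d := by
  have hn0 : n ≠ 0 := hn.ne'
  have hm0 : m ≠ 0 := hm.ne'
  have hN0 : n * m ≠ 0 := mul_ne_zero hn0 hm0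
  have hG0 : Nat.gcd n m ≠ 0 := fun h => hn0 (Nat.eq_zero_of_gcd_eq_zero_left h)
  have L : beta n * beta m =
      ∑ p ∈ n.divisors.sigma (fun _ => m.divisors),
        ((p.1 : ℤ) * lam (n / p.1) * ((p.2 : ℤ) * lam (m / p.2))) := by
    rw [beta, beta, Finset.sum_mul_sum]
    exact Finset.sum_sigma' _ _ _
  have R : (∑ d ∈ (Nat.gcd n m).divisors, beta (n * m / d ^ 2) * (d : ℤ) * lam d) =
      ∑ p ∈ (Nat.gcd n m).divisors.sigma (fun d => (n * m / d ^ 2).divisors),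
        ((p.2 : ℤ) * lam ((n * m / p.1 ^ 2) / p.2) * (p.1 : ℤ) * lam p.1) := by
    rw [show (∑ d ∈ (Nat.gcd n m).divisors, beta (n * m / d ^ 2) * (d : ℤ) * lam d)
        = ∑ d ∈ (Nat.gcd n m).divisors, ∑ e ∈ (n * m / d ^ 2).divisors,
            ((e : ℤ) * lam ((n * m / d ^ 2) / e) * (d : ℤ) * lam d) from
      Finset.sum_congr rfl fun d _ => by rw [beta, Finset.sum_mul, Finset.sum_mul]]
    exact Finset.sum_sigma' _ _ _
  rw [L, R]
  refine (Finset.sum_nbij'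
    (i := fun p => (⟨p.1 * (p.1 * p.2 / Nat.gcd (p.1 * p.2) m),
           p.1 * p.2 / (p.1 * (p.1 * p.2 / Nat.gcd (p.1 * p.2) m))⟩ : Σ _ : ℕ, ℕ))
    (j := fun p => (⟨p.1 / (p.1 * p.2 / Nat.gcd (p.1 * p.2) m),
           p.1 * p.2 / (p.1 / (p.1 * p.2 / Nat.gcd (p.1 * p.2) m))⟩ : Σ _ : ℕ, ℕ))
    ?_ ?_ ?_ ?_ ?_).symm
  · -- forward membership
    rintro ⟨d, e⟩ hp
    simp only [Finset.mem_sigma, Nat.mem_divisors] at hp ⊢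
    obtain ⟨⟨hd, -⟩, he, -⟩ := hp
    have hd0 : d ≠ 0 := fun h => hG0 (Nat.eq_zero_of_zero_dvd (h ▸ hd))
    obtain ⟨h1, h2, h3⟩ := forward hn0 hm0 hd0 hd he
    exact ⟨⟨h1, hn0⟩, h3, hm0⟩
  · -- backward membership
    rintro ⟨a, b⟩ hp
    simp only [Finset.mem_sigma, Nat.mem_divisors] at hp ⊢
    obtain ⟨⟨ha, -⟩, hb, -⟩ := hp
    obtain ⟨h1, h2, h3⟩ := backward hn0 hm0 ha hb
    refine ⟨⟨h2, hG0⟩, h3, ?_⟩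
    have hdn : (a / (a * b / Nat.gcd (a * b) m)) ∣ n := h2.trans (Nat.gcd_dvd_left n m)
    have hdm : (a / (a * b / Nat.gcd (a * b) m)) ∣ m := h2.trans (Nat.gcd_dvd_right n m)
    have hd2 : (a / (a * b / Nat.gcd (a * b) m)) ^ 2 ∣ n * m := by
      rw [pow_two]; exact mul_dvd_mul hdn hdm
    have hd0 : (a / (a * b / Nat.gcd (a * b) m)) ≠ 0 :=
      fun h => hG0 (Nat.eq_zero_of_zero_dvd (h ▸ h2))
    exact (Nat.div_pos (Nat.le_of_dvd (Nat.pos_of_ne_zero hN0) hd2)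
      (pow_pos (Nat.pos_of_ne_zero hd0) 2)).ne'
  · -- j (i p) = p  for p ∈ S₁  (round trip on (d,e) side)
    rintro ⟨d, e⟩ hp
    simp only [Finset.mem_sigma, Nat.mem_divisors] at hp
    obtain ⟨⟨hd, -⟩, he, hq0⟩ := hp
    have hd0 : d ≠ 0 := fun h => hG0 (Nat.eq_zero_of_zero_dvd (h ▸ hd))
    have he0 : e ≠ 0 := fun h => hq0 (Nat.eq_zero_of_zero_dvd (h ▸ he))
    obtain ⟨han, hce, hbm⟩ := forward hn0 hm0 hd0 hd he
    dsimp only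
    set c := d * e / Nat.gcd (d * e) m with hc
    have hX0 : d * e ≠ 0 := mul_ne_zero hd0 he0
    have hc0 : c ≠ 0 := by
      rw [hc]
      exact (Nat.div_pos (Nat.le_of_dvd (Nat.pos_of_ne_zero hX0) (Nat.gcd_dvd_left _ _))
        (Nat.pos_of_ne_zero (fun h => hm0 (Nat.eq_zero_of_gcd_eq_zero_right h)))).ne'
    have haX : d * c ∣ d * e := mul_dvd_mul_left d hce
    have hab : d * c * (d * e / (d * c)) = d * e := Nat.mul_div_cancel' haX
    rw [hab, ← hc, Nat.mul_div_cancel d (Nat.pos_of_ne_zero hc0),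
      Nat.mul_div_cancel_left e (Nat.pos_of_ne_zero hd0)]
  · -- i (j p) = p  for p ∈ S₂
    rintro ⟨a, b⟩ hp
    simp only [Finset.mem_sigma, Nat.mem_divisors] at hp
    obtain ⟨⟨ha, -⟩, hb, -⟩ := hp
    have ha0 : a ≠ 0 := fun h => hn0 (Nat.eq_zero_of_zero_dvd (h ▸ ha))
    have hb0 : b ≠ 0 := fun h => hm0 (Nat.eq_zero_of_zero_dvd (h ▸ hb))
    obtain ⟨hca, hdg, -⟩ := backward hn0 hm0 ha hb
    dsimp only
    set c := a * b / Nat.gcd (a * b) m with hc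
    have hdX : a / c ∣ a * b := (Nat.div_dvd_of_dvd hca).trans (dvd_mul_right a b)
    have hde : a / c * (a * b / (a / c)) = a * b := Nat.mul_div_cancel' hdX
    rw [hde, ← hc, Nat.div_mul_cancel hca,
      Nat.mul_div_cancel_left b (Nat.pos_of_ne_zero ha0)]
  · -- term equality
    rintro ⟨d, e⟩ hp
    simp only [Finset.mem_sigma, Nat.mem_divisors] at hp
    obtain ⟨⟨hd, -⟩, he, hq0⟩ := hp
    have hd0 : d ≠ 0 := fun h => hG0 (Nat.eq_zero_of_zero_dvd (h ▸ hd))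
    have he0 : e ≠ 0 := fun h => hq0 (Nat.eq_zero_of_zero_dvd (h ▸ he))
    obtain ⟨han, hce, hbm⟩ := forward hn0 hm0 hd0 hd he
    dsimp only
    set c := d * e / Nat.gcd (d * e) m with hc
    have hX0 : d * e ≠ 0 := mul_ne_zero hd0 he0
    have hc0 : c ≠ 0 := by
      rw [hc]
      exact (Nat.div_pos (Nat.le_of_dvd (Nat.pos_of_ne_zero hX0) (Nat.gcd_dvd_left _ _))
        (Nat.pos_of_ne_zero (fun h => hm0 (Nat.eq_zero_of_gcd_eq_zero_right h)))).ne'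
    have ha0 : d * c ≠ 0 := mul_ne_zero hd0 hc0
    have haX : d * c ∣ d * e := mul_dvd_mul_left d hce
    have hab : d * c * (d * e / (d * c)) = d * e := Nat.mul_div_cancel' haX
    have hb0 : d * e / (d * c) ≠ 0 :=
      (Nat.div_pos (Nat.le_of_dvd (Nat.pos_of_ne_zero hX0) haX)
        (Nat.pos_of_ne_zero ha0)).ne'
    have hna0 : n / (d * c) ≠ 0 :=
      (Nat.div_pos (Nat.le_of_dvd hn han) (Nat.pos_of_ne_zero ha0)).ne'
    have hmb0 : m / (d * e / (d * c)) ≠ 0 :=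
      (Nat.div_pos (Nat.le_of_dvd hm hbm) (Nat.pos_of_ne_zero hb0)).ne'
    have hdn : d ∣ n := hd.trans (Nat.gcd_dvd_left n m)
    have hdm : d ∣ m := hd.trans (Nat.gcd_dvd_right n m)
    have hd2 : d ^ 2 ∣ n * m := by rw [pow_two]; exact mul_dvd_mul hdn hdm
    have hd2e : d ^ 2 * e ∣ n * m := (Nat.dvd_div_iff_mul_dvd hd2).1 he
    have hXN : d * e ∣ n * m := dvd_trans ⟨d, by ring⟩ hd2e
    have hdq : d ∣ n * m / (d * e) :=
      (Nat.dvd_div_iff_mul_dvd hXN).2 (by rw [show d * e * d = d ^ 2 * e by ring]; exact hd2e)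
    have hq2 : n * m / (d ^ 2 * e) ≠ 0 :=
      (Nat.div_pos (Nat.le_of_dvd (Nat.pos_of_ne_zero hN0) hd2e)
        (Nat.pos_of_ne_zero (mul_ne_zero (pow_ne_zero 2 hd0) he0))).ne'
    have e2 : d * (n * m / (d ^ 2 * e)) = n * m / (d * e) := by
      rw [show d ^ 2 * e = d * e * d by ring, ← Nat.div_div_eq_div_mul]
      exact Nat.mul_div_cancel' hdq
    have key2 : lam (n * m / d ^ 2 / e) * lam d = lam (n * m / (d * e)) := by
      rw [Nat.div_div_eq_div_mul, ← e2, lam_mul hd0 hq2]; ring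
    have e3 : n / (d * c) * (m / (d * e / (d * c))) = n * m / (d * e) := by
      rw [Nat.div_mul_div_comm han hbm, hab]
    have key1 : lam (n / (d * c)) * lam (m / (d * e / (d * c))) = lam (n * m / (d * e)) := by
      rw [← lam_mul hna0 hmb0, e3]
    have hcast : ((d * c : ℕ) : ℤ) * ((d * e / (d * c) : ℕ) : ℤ) = (d : ℤ) * (e : ℤ) := by
      have := congrArg (fun x : ℕ => (x : ℤ)) hab
      push_cast at this ⊢
      linarith [this]
    calc (e : ℤ) * lam (n * m / d ^ 2 / e) * d * lam d
        = ((d : ℤ) * e) * (lam (n * m / d ^ 2 / e) * lam d) := by ring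
      _ = (((d * c : ℕ) : ℤ) * ((d * e / (d * c) : ℕ) : ℤ))
            * (lam (n / (d * c)) * lam (m / (d * e / (d * c)))) := by
          rw [key2, key1, hcast]
      _ = ((d * c : ℕ) : ℤ) * lam (n / (d * c))
            * (((d * e / (d * c) : ℕ) : ℤ) * lam (m / (d * e / (d * c)))) := by ring
end

section
/- Let f, g, h, k be completely multiplicative arithmetic functions (with values in the complex numbers). Then (f∗g)·(h∗k) = (fh)∗(fk)∗(gh)∗(gk)∗w, where ∗ denotes Dirichlet convolution, products of functions are pointwise products, and w is the arithmetic function with w(n) = μ(m)f(m)g(m)h(m)k(m) if n = m² is a perfect square and w(n) = 0 otherwise; here μ is the Möbius function. -/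
/-- Dirichlet convolution of two complex-valued arithmetic functions. -/
noncomputable def dconv (F G : ℕ → ℂ) (n : ℕ) : ℂ := ∑ p ∈ n.divisorsAntidiagonal, F p.1 * G p.2

/-- The function `w` with `w(m²) = μ(m) f(m) g(m) h(m) k(m)` and `w(n) = 0` for `n` not a
square. -/
noncomputable def wfun (f g h k : ℕ → ℂ) (n : ℕ) : ℂ :=
  if IsSquare n then
    (ArithmeticFunction.moebius (Nat.sqrt n) : ℂ) * f (Nat.sqrt n) * g (Nat.sqrt n) *
      h (Nat.sqrt n) * k (Nat.sqrt n)
  else 0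

open Finset PowerSeries

namespace BR12

noncomputable def Bc (z t : ℂ) (m : ℕ) : ℂ := ∑ j ∈ range (m+1), z^j * t^(m-j)
noncomputable def cseq (u v : ℕ → ℂ) (e : ℕ) : ℂ := ∑ i ∈ range (e+1), u i * v (e-i)

lemma Bc_zero (z t : ℂ) : Bc z t 0 = 1 := by simp [Bc]

lemma Bc_succ (z t : ℂ) (m : ℕ) : Bc z t (m+1) = z * Bc z t m + t^(m+1) := by
  rw [Bc, Finset.sum_range_succ' (fun j => z^j * t^(m+1-j))]
  simp only [pow_zero, one_mul, Nat.sub_zero, pow_succ, Bc, Finset.mul_sum]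
  congr 1
  apply Finset.sum_congr rfl
  intro j hj
  rw [show m + 1 - (j + 1) = m - j from by omega]
  ring

lemma Bc_key (z t : ℂ) : ∀ a b : ℕ,
    Bc z t (a+1) * Bc z t (b+1) = z*t*(Bc z t a * Bc z t b) + Bc z t (a+b+2) := by
  intro a
  induction a with
  | zero =>
    intro b
    have h1 : Bc z t 1 = z + t := by rw [show (1:ℕ) = 0+1 from rfl, Bc_succ, Bc_zero]; ring
    rw [h1, Bc_zero, show (0:ℕ)+b+2 = (b+1)+1 from by omega, Bc_succ z t (b+1), Bc_succ z t b]
    ring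
  | succ a ih =>
    intro b
    rw [show a+1+1 = (a+1)+1 from rfl, Bc_succ z t (a+1),
      show a+1+b+2 = (a+b+2)+1 from by omega, Bc_succ z t (a+b+2)]
    have ha := Bc_succ z t a
    have hb := Bc_succ z t b
    linear_combination z * ih b + t^(a+2) * hb - z*t*Bc z t b * ha

lemma Bc_peel (z t : ℂ) (d : ℕ) : Bc z t (d+2) = z^(d+2) + t^(d+2) + z*t*Bc z t d := by
  rw [Bc, Finset.sum_range_succ]
  rw [Finset.sum_range_succ' (fun j => z^j * t^(d+2-j))]
  simp only [Nat.sub_self, pow_zero, mul_one, one_mul, Nat.sub_zero, Bc, Finset.mul_sum]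
  have : ∑ i ∈ range (d+1), z^(i+1) * t^(d+2-(i+1)) = ∑ i ∈ range (d+1), z*t*(z^i * t^(d-i)) := by
    apply Finset.sum_congr rfl
    intro j hj
    simp only [mem_range] at hj
    rw [show d + 2 - (j + 1) = (d - j) + 1 from by omega]
    ring
  rw [this]
  ring

end BR12

namespace BR12
open BR12

lemma cseq_eq (u v : ℕ → ℂ) (e : ℕ) :
    cseq u v e = PowerSeries.coeff e (PowerSeries.mk u * PowerSeries.mk v) := by
  rw [PowerSeries.coeff_mul, Finset.Nat.sum_antidiagonal_eq_sum_range_succ_mk]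
  simp [cseq]

lemma mk_cseq (u v : ℕ → ℂ) : PowerSeries.mk (cseq u v) = PowerSeries.mk u * PowerSeries.mk v := by
  ext e
  rw [PowerSeries.coeff_mk, cseq_eq]

noncomputable def Useq (x z t : ℂ) : ℕ → ℂ := fun m => x^m * Bc z t m

lemma mk_pw_mul (x z t : ℂ) :
    PowerSeries.mk (fun i => (x*z)^i) * PowerSeries.mk (fun i => (x*t)^i) =
      PowerSeries.mk (Useq x z t) := by
  rw [← mk_cseq]
  ext m
  rw [PowerSeries.coeff_mk, PowerSeries.coeff_mk, cseq, Useq, Bc, Finset.mul_sum]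
  apply Finset.sum_congr rfl
  intro i hi
  simp only [Finset.mem_range] at hi
  rw [mul_pow, mul_pow, show x^m = x^i * x^(m-i) from by
    rw [← pow_add, Nat.add_sub_cancel' (by omega)]]
  ring

lemma Tkey (x y z t : ℂ) (d : ℕ) :
    cseq (Useq x z t) (Useq y z t) (d+2) =
      x*y*z*t * cseq (Useq x z t) (Useq y z t) d + Bc x y (d+2) * Bc z t (d+2) := by
  rw [cseq, Finset.sum_range_succ, Finset.sum_range_succ' (fun m => Useq x z t m * Useq y z t (d+2-m))]
  have hmid : ∑ m ∈ range (d+1), Useq x z t (m+1) * Useq y z t (d+2-(m+1)) =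
      ∑ m ∈ range (d+1), (x*y*z*t * (Useq x z t m * Useq y z t (d-m))
        + (x*y*Bc z t (d+2)) * (x^m * y^(d-m))) := by
    apply Finset.sum_congr rfl
    intro m hm
    simp only [Finset.mem_range] at hm
    have h1 : d+2-(m+1) = (d-m)+1 := by omega
    have h2 : m + (d-m) + 2 = d + 2 := by omega
    simp only [h1, Useq]
    have hk := Bc_key z t m (d-m)
    rw [h2] at hk
    rw [show (d-m)+1 = d-m+1 from rfl]
    calc x^(m+1) * Bc z t (m+1) * (y^(d-m+1) * Bc z t (d-m+1))
        = (x^(m+1) * y^(d-m+1)) * (Bc z t (m+1) * Bc z t (d-m+1)) := by ring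
      _ = (x^(m+1) * y^(d-m+1)) * (z*t*(Bc z t m * Bc z t (d-m)) + Bc z t (d+2)) := by rw [hk]
      _ = x*y*z*t * (x^m * Bc z t m * (y^(d-m) * Bc z t (d-m)))
          + (x*y*Bc z t (d+2)) * (x^m * y^(d-m)) := by ring
  rw [hmid, Finset.sum_add_distrib, ← Finset.mul_sum, ← Finset.mul_sum]
  have hA : ∑ m ∈ range (d+1), x^m * y^(d-m) = Bc x y d := rfl
  rw [hA, Bc_peel x y d]
  simp only [Useq, cseq]
  rw [Nat.sub_zero, Nat.sub_self]
  simp only [pow_zero, one_mul, Bc_zero, mul_one]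
  ring

end BR12

namespace BR12

lemma mk_w (a : ℂ) (w : ℕ → ℂ)
    (hw : ∀ m, w m = if m = 0 then 1 else if m = 2 then -a else 0) :
    PowerSeries.mk w = 1 - PowerSeries.C a * (PowerSeries.X)^2 := by
  ext m
  rw [PowerSeries.coeff_mk, hw, map_sub, PowerSeries.coeff_one, PowerSeries.coeff_C_mul,
    PowerSeries.coeff_X_pow]
  rcases eq_or_ne m 0 with rfl | h0
  · norm_num
  rcases eq_or_ne m 2 with rfl | h2
  · norm_num
  · simp [h0, h2]

lemma coeff_TW (a : ℂ) (w : ℕ → ℂ)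
    (hw : ∀ m, w m = if m = 0 then 1 else if m = 2 then -a else 0)
    (U V : ℕ → ℂ) (e : ℕ) :
    PowerSeries.coeff e (PowerSeries.mk U * (PowerSeries.mk V * PowerSeries.mk w)) =
      cseq U V e - a * (if 2 ≤ e then cseq U V (e-2) else 0) := by
  rw [mk_w a w hw]
  have : PowerSeries.mk U * (PowerSeries.mk V * (1 - PowerSeries.C a * PowerSeries.X^2)) =
      (PowerSeries.mk U * PowerSeries.mk V)
        - PowerSeries.C a * ((PowerSeries.mk U * PowerSeries.mk V) * PowerSeries.X^2) := by
    ring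
  rw [this, map_sub, PowerSeries.coeff_C_mul, PowerSeries.coeff_mul_X_pow', ← cseq_eq]
  congr 1
  split_ifs with h
  · rw [cseq_eq]
  · rfl

lemma main_alg (x y z t : ℂ) (w : ℕ → ℂ)
    (hw : ∀ m, w m = if m = 0 then 1 else if m = 2 then -(x*y*z*t) else 0) (e : ℕ) :
    Bc x y e * Bc z t e =
      cseq (fun i => (x*z)^i)
        (cseq (fun i => (x*t)^i)
          (cseq (fun i => (y*z)^i)
            (cseq (fun i => (y*t)^i) w))) e := by
  rw [cseq_eq, mk_cseq, mk_cseq, mk_cseq]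
  rw [show PowerSeries.mk (fun i => (x*z)^i) * (PowerSeries.mk (fun i => (x*t)^i) *
        (PowerSeries.mk (fun i => (y*z)^i) * (PowerSeries.mk (fun i => (y*t)^i) *
          PowerSeries.mk w))) =
      (PowerSeries.mk (fun i => (x*z)^i) * PowerSeries.mk (fun i => (x*t)^i)) *
        ((PowerSeries.mk (fun i => (y*z)^i) * PowerSeries.mk (fun i => (y*t)^i)) *
          PowerSeries.mk w) from by ring]
  rw [mk_pw_mul x z t, mk_pw_mul y z t, coeff_TW _ w hw]
  match e with
  | 0 => simp [cseq, Useq, Bc_zero]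
  | 1 =>
    have h1 : Bc x y 1 = x + y := by rw [show (1:ℕ) = 0+1 from rfl, Bc_succ, Bc_zero]; ring
    simp only [show ¬ (2 ≤ 1) from by omega, if_false, mul_zero, sub_zero]
    rw [cseq, Finset.sum_range_succ, Finset.sum_range_succ, Finset.sum_range_zero]
    simp only [Useq, Nat.sub_zero, Nat.sub_self, pow_zero, one_mul, Bc_zero, mul_one, zero_add,
      pow_one]
    rw [h1]; ring
  | (d+2) =>
    rw [Tkey x y z t d, if_pos (by omega : 2 ≤ d+2), show d+2-2 = d from by omega]
    ring

end BR12

namespace BR12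

/-- Promote a completely multiplicative function to an arithmetic function. -/
noncomputable def mkAF (f : ℕ → ℂ) : ArithmeticFunction ℂ := ⟨fun n => if n = 0 then 0 else f n, by simp⟩

lemma mkAF_apply (f : ℕ → ℂ) {n : ℕ} (hn : n ≠ 0) : mkAF f n = f n := by
  simp [mkAF, hn]

lemma mkAF_mult (f : ℕ → ℂ) (hf1 : f 1 = 1) (hf : ∀ a b : ℕ, f (a * b) = f a * f b) :
    (mkAF f).IsMultiplicative := by
  constructor
  · simp [mkAF, hf1]
  · intro m n _
    rcases eq_or_ne m 0 with rfl | hm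
    · simp [mkAF]
    rcases eq_or_ne n 0 with rfl | hn
    · simp [mkAF]
    rw [mkAF_apply f (Nat.mul_ne_zero hm hn), mkAF_apply f hm, mkAF_apply f hn, hf]

lemma cm_pow (f : ℕ → ℂ) (hf1 : f 1 = 1) (hf : ∀ a b : ℕ, f (a * b) = f a * f b)
    (p : ℕ) : ∀ i : ℕ, f (p ^ i) = (f p) ^ i := by
  intro i
  induction i with
  | zero => simpa using hf1
  | succ i ih => rw [pow_succ, hf, ih, pow_succ]

noncomputable def WAF (f g h k : ℕ → ℂ) : ArithmeticFunction ℂ :=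
  ⟨wfun f g h k, by simp [wfun]⟩

lemma WAF_apply (f g h k : ℕ → ℂ) (n : ℕ) : WAF f g h k n = wfun f g h k n := rfl

lemma conv_pp (U V : ArithmeticFunction ℂ) {p : ℕ} (hp : p.Prime) (e : ℕ) :
    (U * V) (p ^ e) = ∑ i ∈ Finset.range (e+1), U (p^i) * V (p^(e-i)) := by
  rw [ArithmeticFunction.mul_apply, Nat.sum_divisorsAntidiagonal (fun a b => U a * V b),
    Nat.sum_divisors_prime_pow hp]
  apply Finset.sum_congr rfl
  intro i hi
  simp only [Finset.mem_range] at hi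
  rw [Nat.pow_div (by omega) hp.pos]

lemma dconv_eq (u v : ℕ → ℂ) (U V : ArithmeticFunction ℂ)
    (hu : ∀ m : ℕ, m ≠ 0 → u m = U m) (hv : ∀ m : ℕ, m ≠ 0 → v m = V m)
    {n : ℕ} (hn : n ≠ 0) : dconv u v n = (U * V) n := by
  rw [dconv, ArithmeticFunction.mul_apply]
  apply Finset.sum_congr rfl
  intro q hq
  rw [Nat.mem_divisorsAntidiagonal] at hq
  have h1 : q.1 ≠ 0 := by rintro h; rw [h] at hq; simp at hq; omega
  have h2 : q.2 ≠ 0 := by rintro h; rw [h] at hq; simp at hq; omega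
  rw [hu q.1 h1, hv q.2 h2]

end BR12

namespace BR12

lemma isSquare_of_coprime_mul {m n : ℕ} (cop : m.Coprime n) (hsq : IsSquare (m * n)) :
    IsSquare m := by
  obtain ⟨c, hc⟩ := hsq
  have h : m * n = c ^ 2 := by rw [hc]; ring
  obtain ⟨d, hd⟩ := exists_eq_pow_of_mul_eq_pow (α := ℕ)
    (Nat.isUnit_iff.mpr cop) h
  exact ⟨d, by rw [hd]; ring⟩

lemma WAF_mult (f g h k : ℕ → ℂ)
    (hf1 : f 1 = 1) (hf : ∀ a b : ℕ, f (a * b) = f a * f b)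
    (hg1 : g 1 = 1) (hg : ∀ a b : ℕ, g (a * b) = g a * g b)
    (hh1 : h 1 = 1) (hh : ∀ a b : ℕ, h (a * b) = h a * h b)
    (hk1 : k 1 = 1) (hk : ∀ a b : ℕ, k (a * b) = k a * k b) :
    (WAF f g h k).IsMultiplicative := by
  constructor
  · show wfun f g h k 1 = 1
    rw [wfun, if_pos (by exact ⟨1, by norm_num⟩)]
    norm_num [hf1, hg1, hh1, hk1]
  · intro m n cop
    show wfun f g h k (m * n) = wfun f g h k m * wfun f g h k n
    by_cases hm : IsSquare m
    · by_cases hn : IsSquare n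
      · obtain ⟨a, rfl⟩ := hm
        obtain ⟨b, rfl⟩ := hn
        have hab : (a * a) * (b * b) = (a * b) * (a * b) := by ring
        have hcop : a.Coprime b := by
          apply Nat.Coprime.coprime_dvd_left (Dvd.intro a rfl)
          exact Nat.Coprime.coprime_dvd_right (Dvd.intro b rfl) cop
        rw [wfun, wfun, wfun, if_pos ⟨a*b, by rw [hab]⟩, if_pos ⟨a, rfl⟩, if_pos ⟨b, rfl⟩]
        rw [hab, Nat.sqrt_eq a, Nat.sqrt_eq b, Nat.sqrt_eq (a*b)]
        rw [hf, hg, hh, hk, ArithmeticFunction.isMultiplicative_moebius.map_mul_of_coprime hcop]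
        push_cast
        ring
      · have hmn : ¬ IsSquare (m * n) := fun hs =>
          hn (isSquare_of_coprime_mul cop.symm (by rwa [mul_comm] at hs))
        rw [wfun, wfun, wfun, if_neg hmn, if_neg hn]
        ring
    · have hmn : ¬ IsSquare (m * n) := fun hs => hm (isSquare_of_coprime_mul cop hs)
      rw [wfun, wfun, wfun, if_neg hmn, if_neg hm]
      ring

lemma not_isSquare_pow_odd {p : ℕ} (hp : p.Prime) {m : ℕ} (hm : ¬ Even m) :
    ¬ IsSquare (p ^ m) := by
  rintro ⟨c, hc⟩
  apply hm
  have hc2 : p ^ m = c ^ 2 := by rw [hc]; ring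
  have h1 : (p ^ m).factorization p = m := by
    rw [Nat.Prime.factorization_pow hp]; simp
  have h2 : (c ^ 2).factorization p = 2 * c.factorization p := by
    rw [Nat.factorization_pow]; simp
  rw [hc2, h2] at h1
  exact ⟨c.factorization p, by omega⟩

lemma WAF_pp (f g h k : ℕ → ℂ)
    (hf1 : f 1 = 1) (hf : ∀ a b : ℕ, f (a * b) = f a * f b)
    (hg1 : g 1 = 1) (hg : ∀ a b : ℕ, g (a * b) = g a * g b)
    (hh1 : h 1 = 1) (hh : ∀ a b : ℕ, h (a * b) = h a * h b)
    (hk1 : k 1 = 1) (hk : ∀ a b : ℕ, k (a * b) = k a * k b)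
    {p : ℕ} (hp : p.Prime) (m : ℕ) :
    wfun f g h k (p ^ m) =
      if m = 0 then 1 else if m = 2 then -(f p * g p * h p * k p) else 0 := by
  by_cases he : Even m
  · obtain ⟨j, hj⟩ := he
    have hpm : p ^ m = (p ^ j) ^ 2 := by rw [← pow_mul]; congr 1; omega
    have hsqrt : Nat.sqrt (p ^ m) = p ^ j := by rw [hpm, Nat.sqrt_eq']
    rw [wfun, if_pos ⟨p ^ j, by rw [hpm]; ring⟩, hsqrt]
    match j, hj with
    | 0, hj =>
      simp only [pow_zero, hf1, hg1, hh1, hk1]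
      norm_num [show m = 0 by omega]
    | 1, hj =>
      rw [pow_one, ArithmeticFunction.moebius_apply_prime hp]
      rw [show m = 2 by omega, if_neg (by omega : ¬(2:ℕ) = 0), if_pos rfl]
      push_cast
      ring
    | (j+2), hj =>
      rw [ArithmeticFunction.moebius_apply_prime_pow hp (by omega)]
      rw [if_neg (by omega), if_neg (by omega : ¬ m = 0), if_neg (by omega : ¬ m = 2)]
      norm_num
  · rw [wfun, if_neg (not_isSquare_pow_odd hp he)]
    rw [if_neg (by rintro rfl; exact he (by norm_num)),
      if_neg (by rintro rfl; exact he (by norm_num))]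

end BR12


open BR12 ArithmeticFunction in
theorem stmt_12 (f g h k : ℕ → ℂ)
    (hf1 : f 1 = 1) (hf : ∀ a b : ℕ, f (a * b) = f a * f b)
    (hg1 : g 1 = 1) (hg : ∀ a b : ℕ, g (a * b) = g a * g b)
    (hh1 : h 1 = 1) (hh : ∀ a b : ℕ, h (a * b) = h a * h b)
    (hk1 : k 1 = 1) (hk : ∀ a b : ℕ, k (a * b) = k a * k b)
    (n : ℕ) (hn : 0 < n) :
    dconv f g n * dconv h k n =
      dconv (fun m => f m * h m)
        (dconv (fun m => f m * k m)
          (dconv (fun m => g m * h m)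
            (dconv (fun m => g m * k m) (wfun f g h k)))) n := by
  have hF := mkAF_mult f hf1 hf
  have hG := mkAF_mult g hg1 hg
  have hH := mkAF_mult h hh1 hh
  have hK := mkAF_mult k hk1 hk
  have hW := WAF_mult f g h k hf1 hf hg1 hg hh1 hh hk1 hk
  have hn' : n ≠ 0 := hn.ne'
  have hfh : ∀ m : ℕ, m ≠ 0 → f m * h m = ((mkAF f).pmul (mkAF h)) m := fun m hm => by
    rw [pmul_apply, mkAF_apply f hm, mkAF_apply h hm]
  have hfk : ∀ m : ℕ, m ≠ 0 → f m * k m = ((mkAF f).pmul (mkAF k)) m := fun m hm => by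
    rw [pmul_apply, mkAF_apply f hm, mkAF_apply k hm]
  have hgh : ∀ m : ℕ, m ≠ 0 → g m * h m = ((mkAF g).pmul (mkAF h)) m := fun m hm => by
    rw [pmul_apply, mkAF_apply g hm, mkAF_apply h hm]
  have hgk : ∀ m : ℕ, m ≠ 0 → g m * k m = ((mkAF g).pmul (mkAF k)) m := fun m hm => by
    rw [pmul_apply, mkAF_apply g hm, mkAF_apply k hm]
  have hwW : ∀ m : ℕ, m ≠ 0 → wfun f g h k m = WAF f g h k m := fun m _ => rfl
  have e4 : ∀ m : ℕ, m ≠ 0 → dconv (fun m => g m * k m) (wfun f g h k) m =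
      ((mkAF g).pmul (mkAF k) * WAF f g h k) m := fun m hm =>
    dconv_eq _ _ _ _ hgk hwW hm
  have e3 : ∀ m : ℕ, m ≠ 0 →
      dconv (fun m => g m * h m) (dconv (fun m => g m * k m) (wfun f g h k)) m =
      ((mkAF g).pmul (mkAF h) * ((mkAF g).pmul (mkAF k) * WAF f g h k)) m := fun m hm =>
    dconv_eq _ _ _ _ hgh e4 hm
  have e2 : ∀ m : ℕ, m ≠ 0 →
      dconv (fun m => f m * k m)
        (dconv (fun m => g m * h m) (dconv (fun m => g m * k m) (wfun f g h k))) m =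
      ((mkAF f).pmul (mkAF k) *
        ((mkAF g).pmul (mkAF h) * ((mkAF g).pmul (mkAF k) * WAF f g h k))) m := fun m hm =>
    dconv_eq _ _ _ _ hfk e3 hm
  have e1 : dconv (fun m => f m * h m)
      (dconv (fun m => f m * k m)
        (dconv (fun m => g m * h m) (dconv (fun m => g m * k m) (wfun f g h k)))) n =
      ((mkAF f).pmul (mkAF h) *
        ((mkAF f).pmul (mkAF k) *
          ((mkAF g).pmul (mkAF h) * ((mkAF g).pmul (mkAF k) * WAF f g h k)))) n :=
    dconv_eq _ _ _ _ hfh e2 hn'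
  have eL : dconv f g n * dconv h k n =
      ((mkAF f * mkAF g).pmul (mkAF h * mkAF k)) n := by
    rw [pmul_apply,
      dconv_eq f g _ _ (fun m hm => (mkAF_apply f hm).symm) (fun m hm => (mkAF_apply g hm).symm) hn',
      dconv_eq h k _ _ (fun m hm => (mkAF_apply h hm).symm) (fun m hm => (mkAF_apply k hm).symm) hn']
  rw [eL, e1]
  suffices hEq : (mkAF f * mkAF g).pmul (mkAF h * mkAF k) =
      (mkAF f).pmul (mkAF h) *
        ((mkAF f).pmul (mkAF k) *
          ((mkAF g).pmul (mkAF h) * ((mkAF g).pmul (mkAF k) * WAF f g h k))) by rw [hEq]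
  rw [ArithmeticFunction.IsMultiplicative.eq_iff_eq_on_prime_powers _ ((hF.mul hG).pmul (hH.mul hK)) _
    ((hF.pmul hH).mul ((hF.pmul hK).mul ((hG.pmul hH).mul ((hG.pmul hK).mul hW))))]
  intro p i hp
  have hp0 : ∀ a : ℕ, p ^ a ≠ 0 := fun a => pow_ne_zero a hp.pos.ne'
  -- values of the pointwise products at prime powers
  have vf : ∀ a : ℕ, mkAF f (p ^ a) = (f p) ^ a := fun a => by
    rw [mkAF_apply f (hp0 a), cm_pow f hf1 hf]
  have vg : ∀ a : ℕ, mkAF g (p ^ a) = (g p) ^ a := fun a => by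
    rw [mkAF_apply g (hp0 a), cm_pow g hg1 hg]
  have vh : ∀ a : ℕ, mkAF h (p ^ a) = (h p) ^ a := fun a => by
    rw [mkAF_apply h (hp0 a), cm_pow h hh1 hh]
  have vk : ∀ a : ℕ, mkAF k (p ^ a) = (k p) ^ a := fun a => by
    rw [mkAF_apply k (hp0 a), cm_pow k hk1 hk]
  have c4 : ∀ m : ℕ, ((mkAF g).pmul (mkAF k) * WAF f g h k) (p ^ m) =
      cseq (fun i => (g p * k p)^i) (fun j => wfun f g h k (p ^ j)) m := fun m => by
    rw [conv_pp _ _ hp m, cseq]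
    exact Finset.sum_congr rfl fun a _ => by
      rw [pmul_apply, vg, vk, WAF_apply, mul_pow]
  have c3 : ∀ m : ℕ,
      ((mkAF g).pmul (mkAF h) * ((mkAF g).pmul (mkAF k) * WAF f g h k)) (p ^ m) =
      cseq (fun i => (g p * h p)^i)
        (cseq (fun i => (g p * k p)^i) (fun j => wfun f g h k (p ^ j))) m := fun m => by
    rw [conv_pp _ _ hp m, cseq]
    exact Finset.sum_congr rfl fun a _ => by
      rw [pmul_apply, vg, vh, c4, mul_pow]
  have c2 : ∀ m : ℕ,
      ((mkAF f).pmul (mkAF k) *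
        ((mkAF g).pmul (mkAF h) * ((mkAF g).pmul (mkAF k) * WAF f g h k))) (p ^ m) =
      cseq (fun i => (f p * k p)^i)
        (cseq (fun i => (g p * h p)^i)
          (cseq (fun i => (g p * k p)^i) (fun j => wfun f g h k (p ^ j)))) m := fun m => by
    rw [conv_pp _ _ hp m, cseq]
    exact Finset.sum_congr rfl fun a _ => by
      rw [pmul_apply, vf, vk, c3, mul_pow]
  have c1 : ((mkAF f).pmul (mkAF h) *
        ((mkAF f).pmul (mkAF k) *
          ((mkAF g).pmul (mkAF h) * ((mkAF g).pmul (mkAF k) * WAF f g h k)))) (p ^ i) =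
      cseq (fun j => (f p * h p)^j)
        (cseq (fun j => (f p * k p)^j)
          (cseq (fun j => (g p * h p)^j)
            (cseq (fun j => (g p * k p)^j) (fun j => wfun f g h k (p ^ j))))) i := by
    rw [conv_pp _ _ hp i, cseq]
    exact Finset.sum_congr rfl fun a _ => by
      rw [pmul_apply, vf, vh, c2, mul_pow]
  have cL : ((mkAF f * mkAF g).pmul (mkAF h * mkAF k)) (p ^ i) =
      Bc (f p) (g p) i * Bc (h p) (k p) i := by
    rw [pmul_apply, conv_pp _ _ hp i, conv_pp _ _ hp i, Bc, Bc]
    congr 1 <;> exact Finset.sum_congr rfl fun a _ => by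
      first
      | rw [vf, vg]
      | rw [vh, vk]
  rw [cL, c1]
  exact main_alg (f p) (g p) (h p) (k p) _
    (fun m => WAF_pp f g h k hf1 hf hg1 hg hh1 hh hk1 hk hp m) i
end

section
/- For every positive integer n, β(n)·σ(n) = Σ_{d²k = n} d²·2^{ω(d)}·β₂(k), the sum being over all pairs (d, k) with d²k = n, where σ(n) = Σ_{e∣n} e, ω(d) is the number of distinct prime factors of d, and β₂(k) = Σ_{e∣k} e²·λ(k/e). -/
/-- `β₂(n) = ∑_{d ∣ n} d² · λ(n/d)`. -/
def beta2 (n : ℕ) : ℤ := ∑ d ∈ n.divisors, (d : ℤ) ^ 2 * lam (n / d)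

namespace Stmt15

open ArithmeticFunction Finset
open scoped ArithmeticFunction.omega

/-- Liouville's function as an arithmetic function. -/
def lamAF : ArithmeticFunction ℤ := ⟨fun n => if n = 0 then 0 else lam n, by simp⟩

lemma lamAF_apply' (n : ℕ) : lamAF n = if n = 0 then 0 else lam n := rfl

lemma lamAF_apply {n : ℕ} (hn : n ≠ 0) : lamAF n = lam n := by
  rw [lamAF_apply', if_neg hn]

lemma lamAF_mult : lamAF.IsMultiplicative := by
  refine ⟨by simp [lamAF_apply', lam], fun {m n} h => ?_⟩
  rcases eq_or_ne m 0 with rfl | hm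
  · simp [lamAF_apply']
  rcases eq_or_ne n 0 with rfl | hn
  · simp [lamAF_apply']
  rw [lamAF_apply (mul_ne_zero hm hn), lamAF_apply hm, lamAF_apply hn, lam, lam, lam,
    ArithmeticFunction.cardFactors_mul hm hn, pow_add]

def betaAF : ArithmeticFunction ℤ := ((pow 1 : ArithmeticFunction ℕ) : ArithmeticFunction ℤ) * lamAF

def beta2AF : ArithmeticFunction ℤ := ((pow 2 : ArithmeticFunction ℕ) : ArithmeticFunction ℤ) * lamAF

lemma div_ne_zero_of_dvd {d n : ℕ} (hn : n ≠ 0) (hd : d ∣ n) : n / d ≠ 0 := by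
  rcases hd with ⟨k, rfl⟩
  rcases eq_or_ne d 0 with rfl | hd0
  · simp at hn
  rw [Nat.mul_div_cancel_left _ (Nat.pos_of_ne_zero hd0)]
  intro h; exact hn (by simp [h])

lemma betaAF_apply {n : ℕ} (hn : n ≠ 0) : betaAF n = beta n := by
  rw [betaAF, mul_apply,
    Nat.sum_divisorsAntidiagonal
      (f := fun a b => ((pow 1 : ArithmeticFunction ℕ) : ArithmeticFunction ℤ) a * lamAF b), beta]
  refine sum_congr rfl fun d hd => ?_
  obtain ⟨hdvd, -⟩ := Nat.mem_divisors.mp hd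
  have hd0 : d ≠ 0 := by rintro rfl; exact hn (Nat.eq_zero_of_zero_dvd hdvd)
  rw [natCoe_apply, pow_apply, lamAF_apply (div_ne_zero_of_dvd hn hdvd)]
  simp

lemma beta2AF_apply {n : ℕ} (hn : n ≠ 0) : beta2AF n = beta2 n := by
  rw [beta2AF, mul_apply,
    Nat.sum_divisorsAntidiagonal
      (f := fun a b => ((pow 2 : ArithmeticFunction ℕ) : ArithmeticFunction ℤ) a * lamAF b), beta2]
  refine sum_congr rfl fun d hd => ?_
  obtain ⟨hdvd, -⟩ := Nat.mem_divisors.mp hd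
  rw [natCoe_apply, pow_apply, lamAF_apply (div_ne_zero_of_dvd hn hdvd)]
  push_cast
  simp

lemma betaAF_mult : betaAF.IsMultiplicative :=
  (isMultiplicative_pow.natCast).mul lamAF_mult

lemma beta2AF_mult : beta2AF.IsMultiplicative :=
  (isMultiplicative_pow.natCast).mul lamAF_mult

/-- `t(m) = m · 2^(ω √m)` if `m` is a square, else `0`. -/
def tAF : ArithmeticFunction ℤ :=
  ⟨fun m => if m.sqrt ^ 2 = m then (m : ℤ) * 2 ^ (ArithmeticFunction.cardDistinctFactors m.sqrt)
    else 0, by norm_num⟩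

lemma tAF_apply (m : ℕ) :
    tAF m = if m.sqrt ^ 2 = m then (m : ℤ) * 2 ^ (ω m.sqrt) else 0 := rfl

lemma tAF_sq (d : ℕ) : tAF (d ^ 2) = (d : ℤ) ^ 2 * 2 ^ (ω d) := by
  rw [tAF_apply, Nat.sqrt_eq', if_pos rfl]
  push_cast; ring

lemma tAF_not_sq {m : ℕ} (h : ¬ IsSquare m) : tAF m = 0 := by
  rw [tAF_apply, if_neg]
  intro hc
  exact h ⟨m.sqrt, by rw [← pow_two, hc]⟩

lemma tAF_one : tAF 1 = 1 := by
  have : (1 : ℕ) = 1 ^ 2 := rfl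
  rw [this, tAF_sq]
  simp

lemma omega_card (n : ℕ) : ω n = n.primeFactors.card := by
  rw [cardDistinctFactors_apply, Nat.primeFactors, List.card_toFinset]

lemma omega_mul {a b : ℕ} (ha : a ≠ 0) (hb : b ≠ 0) (h : a.Coprime b) :
    ω (a * b) = ω a + ω b := by
  rw [omega_card, omega_card, omega_card, Nat.Coprime.primeFactors_mul h,
    Finset.card_union_of_disjoint (Nat.Coprime.disjoint_primeFactors h)]

lemma not_isSquare_mul {m n : ℕ} (hmn : m.Coprime n) (h : ¬ (IsSquare m ∧ IsSquare n)) :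
    ¬ IsSquare (m * n) := by
  rintro ⟨c, hc⟩
  have hmc : m * n = c ^ 2 := by rw [hc]; ring
  have hu : IsUnit (gcd m n) := by rw [Nat.isUnit_iff]; exact hmn
  obtain ⟨d, hd⟩ := exists_eq_pow_of_mul_eq_pow hu hmc
  have hu' : IsUnit (gcd n m) := by rw [Nat.isUnit_iff]; exact hmn.symm
  obtain ⟨e, he⟩ := exists_eq_pow_of_mul_eq_pow hu' (by rw [mul_comm] at hmc; exact hmc)
  exact h ⟨⟨d, by rw [hd]; ring⟩, ⟨e, by rw [he]; ring⟩⟩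

lemma tAF_mult : tAF.IsMultiplicative := by
  refine ⟨tAF_one, fun {m n} hmn => ?_⟩
  rcases eq_or_ne m 0 with rfl | hm
  · simp [tAF_apply]
  rcases eq_or_ne n 0 with rfl | hn
  · simp [tAF_apply]
  by_cases hsm : IsSquare m
  · by_cases hsn : IsSquare n
    · obtain ⟨a, rfl⟩ := hsm
      obtain ⟨b, rfl⟩ := hsn
      have ha : a ≠ 0 := by rintro rfl; simp at hm
      have hb : b ≠ 0 := by rintro rfl; simp at hn
      have hab : a.Coprime b :=
        Nat.Coprime.coprime_dvd_right (dvd_mul_right b b)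
          (Nat.Coprime.coprime_dvd_left (dvd_mul_right a a) hmn)
      have e1 : a * a * (b * b) = (a * b) ^ 2 := by ring
      have e2 : a * a = a ^ 2 := by ring
      have e3 : b * b = b ^ 2 := by ring
      rw [e1, e2, e3, tAF_sq, tAF_sq, tAF_sq, omega_mul ha hb hab, pow_add]
      push_cast; ring
    · rw [tAF_not_sq (not_isSquare_mul hmn (by tauto)), tAF_not_sq hsn, mul_zero]
  · rw [tAF_not_sq (not_isSquare_mul hmn (by tauto)), tAF_not_sq hsm, zero_mul]

/-- The left-hand side as an arithmetic function. -/
def FAF : ArithmeticFunction ℤ :=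
  betaAF.pmul ((ArithmeticFunction.sigma 1 : ArithmeticFunction ℕ) : ArithmeticFunction ℤ)

/-- The right-hand side as an arithmetic function. -/
def GAF : ArithmeticFunction ℤ := tAF * beta2AF

lemma FAF_mult : FAF.IsMultiplicative := betaAF_mult.pmul (isMultiplicative_sigma.natCast)

lemma GAF_mult : GAF.IsMultiplicative := tAF_mult.mul beta2AF_mult

/-- alternating geometric sum closed form -/
lemma geom_alt (q : ℤ) (a : ℕ) :
    (q + 1) * ∑ i ∈ range (a + 1), q ^ i * (-1 : ℤ) ^ (a - i) = q ^ (a + 1) + (-1) ^ a := by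
  induction a with
  | zero => simp
  | succ a ih =>
    rw [sum_range_succ]
    have hcong : ∀ i ∈ range (a + 1), q ^ i * (-1 : ℤ) ^ (a + 1 - i) = -(q ^ i * (-1) ^ (a - i)) := by
      intro i hi
      have h : a + 1 - i = (a - i) + 1 := by rw [mem_range] at hi; omega
      rw [h, pow_succ]; ring
    rw [sum_congr rfl hcong, Finset.sum_neg_distrib]
    have h0 : a + 1 - (a + 1) = 0 := by omega
    rw [h0]
    linear_combination (-1 : ℤ) * ih

lemma betaAF_pp {p : ℕ} (hp : p.Prime) (a : ℕ) :
    betaAF (p ^ a) = ∑ i ∈ range (a + 1), (p : ℤ) ^ i * (-1) ^ (a - i) := by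
  rw [betaAF_apply (pow_ne_zero a hp.pos.ne'), beta, Nat.sum_divisors_prime_pow hp]
  refine sum_congr rfl fun i hi => ?_
  rw [mem_range] at hi
  rw [Nat.pow_div (by omega) hp.pos, lam, cardFactors_apply_prime_pow hp]
  push_cast; ring

lemma beta2AF_pp {p : ℕ} (hp : p.Prime) (a : ℕ) :
    beta2AF (p ^ a) = ∑ i ∈ range (a + 1), ((p : ℤ) ^ 2) ^ i * (-1) ^ (a - i) := by
  rw [beta2AF_apply (pow_ne_zero a hp.pos.ne'), beta2, Nat.sum_divisors_prime_pow hp]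
  refine sum_congr rfl fun i hi => ?_
  rw [mem_range] at hi
  rw [Nat.pow_div (by omega) hp.pos, lam, cardFactors_apply_prime_pow hp]
  push_cast; ring

lemma isSquare_pp_iff {p : ℕ} (hp : p.Prime) (i : ℕ) : IsSquare (p ^ i) ↔ Even i := by
  constructor
  · rintro ⟨c, hc⟩
    have hc0 : c ≠ 0 := by
      rintro rfl
      exact (pow_ne_zero i hp.pos.ne') (by simpa using hc)
    have h1 : (p ^ i).factorization p = i := by
      rw [Nat.Prime.factorization_pow hp, Finsupp.single_eq_same]
    rw [hc, Nat.factorization_mul hc0 hc0, Finsupp.add_apply] at h1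
    exact ⟨c.factorization p, h1.symm⟩
  · intro h
    exact h.isSquare_pow p

lemma tAF_pp {p : ℕ} (hp : p.Prime) (i : ℕ) :
    tAF (p ^ i) = if Even i then (if i = 0 then 1 else 2 * (p : ℤ) ^ i) else 0 := by
  by_cases h : Even i
  · rw [if_pos h]
    rcases eq_or_ne i 0 with rfl | hi
    · rw [if_pos rfl, pow_zero, tAF_one]
    · rw [if_neg hi]
      obtain ⟨j, hj⟩ := h
      have hj0 : j ≠ 0 := by omega
      have hpj : p ^ i = (p ^ j) ^ 2 := by rw [← pow_mul]; congr 1; omega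
      rw [hpj, tAF_sq, cardDistinctFactors_apply_prime_pow hp hj0]
      push_cast
      rw [← pow_mul]
      have : j * 2 = i := by omega
      rw [this]; ring
  · rw [if_neg h, tAF_not_sq]
    intro hs
    exact h ((isSquare_pp_iff hp i).mp hs)

lemma tAF_pp_step {p : ℕ} (hp : p.Prime) (i : ℕ) :
    tAF (p ^ (i + 2)) = (p : ℤ) ^ 2 * tAF (p ^ i) + (if i = 0 then (p : ℤ) ^ 2 else 0) := by
  have heven : Even (i + 2) ↔ Even i := by simp [Nat.even_add]
  rw [tAF_pp hp, tAF_pp hp]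
  rcases eq_or_ne i 0 with rfl | hi
  · norm_num
    ring
  · simp only [if_neg hi]
    by_cases h : Even i
    · rw [if_pos (heven.mpr h), if_pos h, if_neg (show i + 2 ≠ 0 by omega)]
      ring
    · rw [if_neg (fun hc => h (heven.mp hc)), if_neg h]
      ring

lemma GAF_pp {p : ℕ} (hp : p.Prime) (a : ℕ) :
    GAF (p ^ a) = ∑ i ∈ range (a + 1), tAF (p ^ i) * beta2AF (p ^ (a - i)) := by
  rw [GAF, mul_apply, Nat.sum_divisorsAntidiagonal (f := fun u v => tAF u * beta2AF v),
    Nat.sum_divisors_prime_pow hp]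
  refine sum_congr rfl fun i hi => ?_
  rw [mem_range] at hi
  rw [Nat.pow_div (by omega) hp.pos]

lemma GAF_pp_step {p : ℕ} (hp : p.Prime) (a : ℕ) :
    GAF (p ^ (a + 2)) =
      beta2AF (p ^ (a + 2)) + (p : ℤ) ^ 2 * GAF (p ^ a) + (p : ℤ) ^ 2 * beta2AF (p ^ a) := by
  rw [GAF_pp hp, GAF_pp hp]
  rw [sum_range_succ' _ (a + 2), sum_range_succ' _ (a + 1)]
  have key : ∀ i ∈ range (a + 1),
      tAF (p ^ (i + 1 + 1)) * beta2AF (p ^ (a + 2 - (i + 1 + 1))) =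
        (p : ℤ) ^ 2 * (tAF (p ^ i) * beta2AF (p ^ (a - i))) +
          (if i = 0 then (p : ℤ) ^ 2 * beta2AF (p ^ a) else 0) := by
    intro i hi
    have h1 : i + 1 + 1 = i + 2 := by omega
    have h2 : a + 2 - (i + 1 + 1) = a - i := by omega
    rw [h1, h2, tAF_pp_step hp]
    rcases eq_or_ne i 0 with rfl | h0
    · rw [if_pos rfl, if_pos rfl]
      simp; ring
    · rw [if_neg h0, if_neg h0]
      ring
  rw [sum_congr rfl key, Finset.sum_add_distrib, ← Finset.mul_sum,
    Finset.sum_ite_eq' (range (a + 1)) 0 (fun _ => (p : ℤ) ^ 2 * beta2AF (p ^ a)),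
    if_pos (mem_range.mpr (by omega))]
  have ht1 : tAF (p ^ (0 + 1)) = 0 := by
    rw [tAF_pp hp]
    norm_num
  have ht0 : tAF (p ^ 0) = 1 := by rw [pow_zero, tAF_one]
  rw [ht1, ht0]
  have ha2 : a + 2 - (0 + 1) = a + 1 := by omega
  have ha0 : a + 2 - 0 = a + 2 := by omega
  rw [ha2, ha0]
  ring

lemma GAF_closed {p : ℕ} (hp : p.Prime) (a : ℕ) :
    ((p : ℤ) ^ 2 - 1) * (((p : ℤ) ^ 2 + 1) * GAF (p ^ a)) =
      ((p : ℤ) ^ 2 + 1) * (((p : ℤ) ^ (a + 1) + (-1) ^ a) * ((p : ℤ) ^ (a + 1) - 1)) := by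
  have hbeta2 : ∀ c, ((p : ℤ) ^ 2 + 1) * beta2AF (p ^ c) = ((p : ℤ) ^ 2) ^ (c + 1) + (-1) ^ c := by
    intro c
    rw [beta2AF_pp hp]
    exact geom_alt ((p : ℤ) ^ 2) c
  induction a using Nat.twoStepInduction with
  | zero =>
    have h0 : GAF (p ^ 0) = 1 := by rw [pow_zero]; exact GAF_mult.map_one
    rw [h0]
    norm_num
    ring
  | one =>
    have h1 : GAF (p ^ 1) = beta2AF (p ^ 1) := by
      rw [GAF_pp hp]
      rw [sum_range_succ, sum_range_succ, sum_range_zero]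
      have ht0 : tAF (p ^ 0) = 1 := by rw [pow_zero, tAF_one]
      have ht1 : tAF (p ^ 1) = 0 := by rw [tAF_pp hp]; norm_num
      rw [ht0, ht1]
      norm_num
    rw [h1]
    have hb := hbeta2 1
    linear_combination ((p : ℤ) ^ 2 - 1) * hb
  | more a ih _ =>
    rw [GAF_pp_step hp]
    have h2 := hbeta2 (a + 2)
    have h0 := hbeta2 a
    linear_combination ((p : ℤ) ^ 2 - 1) * h2 + (p : ℤ) ^ 2 * ih +
      (p : ℤ) ^ 2 * ((p : ℤ) ^ 2 - 1) * h0

lemma main_pp {p : ℕ} (hp : p.Prime) (a : ℕ) : FAF (p ^ a) = GAF (p ^ a) := by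
  have hq2 : (2 : ℤ) ≤ (p : ℤ) := by exact_mod_cast hp.two_le
  have hne : ((p : ℤ) ^ 2 - 1) * ((p : ℤ) ^ 2 + 1) ≠ 0 :=
    mul_ne_zero (by nlinarith) (by nlinarith)
  apply mul_left_cancel₀ hne
  have hb : ((p : ℤ) + 1) * betaAF (p ^ a) = (p : ℤ) ^ (a + 1) + (-1) ^ a := by
    rw [betaAF_pp hp]; exact geom_alt (p : ℤ) a
  have hs : (∑ i ∈ range (a + 1), (p : ℤ) ^ i) * ((p : ℤ) - 1) = (p : ℤ) ^ (a + 1) - 1 :=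
    geom_sum_mul (p : ℤ) (a + 1)
  have hsig : ((ArithmeticFunction.sigma 1 (p ^ a) : ℕ) : ℤ) = ∑ i ∈ range (a + 1), (p : ℤ) ^ i := by
    rw [sigma_one_apply, Nat.sum_divisors_prime_pow hp]
    push_cast
    rfl
  have hF : FAF (p ^ a) = betaAF (p ^ a) * ((ArithmeticFunction.sigma 1 (p ^ a) : ℕ) : ℤ) := by
    rw [FAF, pmul_apply, natCoe_apply]
  rw [hF, hsig, mul_assoc ((p : ℤ) ^ 2 - 1) ((p : ℤ) ^ 2 + 1) (GAF (p ^ a)), GAF_closed hp a]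
  linear_combination (((p : ℤ) ^ 2 + 1) * (((p : ℤ) - 1) * (∑ i ∈ range (a + 1), (p : ℤ) ^ i))) * hb +
    (((p : ℤ) ^ 2 + 1) * ((p : ℤ) ^ (a + 1) + (-1) ^ a)) * hs

end Stmt15

open Stmt15 ArithmeticFunction Finset in
theorem stmt_15 (n : ℕ) (hn : 0 < n) :
    beta n * (ArithmeticFunction.sigma 1 n : ℤ) =
      ∑ d ∈ n.divisors.filter (fun d => d ^ 2 ∣ n),
        (d : ℤ) ^ 2 * 2 ^ (ArithmeticFunction.cardDistinctFactors d) * beta2 (n / d ^ 2) := by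
  have hn0 : n ≠ 0 := hn.ne'
  have hFG : FAF = GAF :=
    (ArithmeticFunction.IsMultiplicative.eq_iff_eq_on_prime_powers FAF FAF_mult GAF GAF_mult).mpr
      fun p i hp => main_pp hp i
  have h1 : beta n * (ArithmeticFunction.sigma 1 n : ℤ) = FAF n := by
    rw [FAF, pmul_apply, betaAF_apply hn0, natCoe_apply]
  rw [h1, hFG]
  rw [GAF, mul_apply, Nat.sum_divisorsAntidiagonal (f := fun u v => tAF u * beta2AF v)]
  have step3 : ∑ u ∈ n.divisors, tAF u * beta2AF (n / u) =
      ∑ u ∈ n.divisors.filter (fun u => u.sqrt ^ 2 = u), tAF u * beta2AF (n / u) := by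
    refine (Finset.sum_filter_of_ne fun u hu hne => ?_).symm
    by_contra hc
    rw [tAF_apply, if_neg hc, zero_mul] at hne
    exact hne rfl
  rw [step3]
  refine Finset.sum_nbij' (fun u => u.sqrt) (fun d => d ^ 2) ?_ ?_ ?_ ?_ ?_
  · intro u hu
    rw [mem_filter, Nat.mem_divisors] at hu
    obtain ⟨⟨hdvd, -⟩, hsq⟩ := hu
    rw [mem_filter, Nat.mem_divisors]
    have h1 : u.sqrt ∣ u := by
      conv_rhs => rw [← hsq]
      exact dvd_pow_self u.sqrt two_ne_zero
    exact ⟨⟨h1.trans hdvd, hn0⟩, by rw [hsq]; exact hdvd⟩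
  · intro d hd
    rw [mem_filter, Nat.mem_divisors] at hd
    obtain ⟨⟨hdvd, -⟩, hsq⟩ := hd
    rw [mem_filter, Nat.mem_divisors]
    exact ⟨⟨hsq, hn0⟩, by rw [Nat.sqrt_eq']⟩
  · intro u hu
    rw [mem_filter] at hu
    exact hu.2
  · intro d _
    exact Nat.sqrt_eq' d
  · intro u hu
    rw [mem_filter, Nat.mem_divisors] at hu
    obtain ⟨⟨hdvd, -⟩, hsq⟩ := hu
    have h1 : tAF u = (u.sqrt : ℤ) ^ 2 * 2 ^ cardDistinctFactors u.sqrt := by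
      conv_lhs => rw [← hsq]
      rw [tAF_sq]
    rw [h1, hsq, beta2AF_apply (div_ne_zero_of_dvd hn0 hdvd), mul_assoc]
end
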